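/- arXiv:2306.13825 — 5 statements merged into one kernel-verified Lean document; each statement's English description precedes it below -/
import Mathlib

section
/- Let n ≥ 1, let Γ ⊆ ℝⁿ be a convex invariant cone and let f be a concave elliptic Hessian operator on Γ. Suppose there is a constant d > 0 such that f(λ + τ) ≥ f(λ) + d·(τ₁⋯τₙ)^{1/n} for all λ ∈ Γ and all τ ∈ Γₙ = (0,∞)ⁿ. Then for every λ ∈ Γ with f(λ) = 1 and every constant C > 0 with Σ_{k=1}^n ∂f/∂λ_k(λ) ≤ C, one has ∂f/∂λᵢ(λ) ≥ 1 / ( (2/d)ⁿ C^{n−1} ) for every i = 1,…,n; in particular f satisfies condition N with constants N₁ = (2/d)ⁿ and N₂ = n−1. -/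
open scoped BigOperators

noncomputable section

/-- The positive orthant `Γₙ = (0,∞)ⁿ` in `ℝⁿ`. -/
def PosOrthant (n : ℕ) : Set (Fin n → ℝ) := {lam | ∀ i, 0 < lam i}

/-- A convex invariant cone: an open cone `Γ ⊆ ℝⁿ` with vertex at the origin, `Γ ≠ ℝⁿ`,
which is convex, satisfies `Γ + Γₙ ⊆ Γ`, and is invariant under permutations of coordinates. -/
def IsConvexInvariantCone {n : ℕ} (Γ : Set (Fin n → ℝ)) : Prop :=
  IsOpen Γ ∧ Γ ≠ Set.univ ∧ Convex ℝ Γ ∧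
    (∀ lam ∈ Γ, ∀ t : ℝ, 0 < t → t • lam ∈ Γ) ∧
    (∀ lam ∈ Γ, ∀ tau ∈ PosOrthant n, lam + tau ∈ Γ) ∧
    (∀ lam ∈ Γ, ∀ σ : Equiv.Perm (Fin n), lam ∘ σ ∈ Γ)

/-- The partial derivative `∂f/∂λᵢ(λ)`. -/
def fpd {n : ℕ} (f : (Fin n → ℝ) → ℝ) (i : Fin n) (lam : Fin n → ℝ) : ℝ :=
  fderiv ℝ f lam (Pi.single i 1)

/-- A concave elliptic Hessian operator on a convex invariant cone `Γ`:
a `C²`, permutation-invariant, concave function `f` on `Γ` which is elliptic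
(`∂f/∂λᵢ > 0`), positive, and positively homogeneous of degree one. -/
def IsConcaveEllipticHessianOp {n : ℕ} (Γ : Set (Fin n → ℝ)) (f : (Fin n → ℝ) → ℝ) : Prop :=
  ContDiffOn ℝ 2 f Γ ∧ ConcaveOn ℝ Γ f ∧
    (∀ lam ∈ Γ, ∀ σ : Equiv.Perm (Fin n), f (lam ∘ σ) = f lam) ∧
    (∀ lam ∈ Γ, ∀ i, 0 < fpd f i lam) ∧
    (∀ lam ∈ Γ, 0 < f lam) ∧
    (∀ lam ∈ Γ, ∀ t : ℝ, 0 < t → f (t • lam) = t * f lam)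

/-- Condition N: whenever `λ ∈ Γ` satisfies `f(λ) = 1` and `Σᵢ ∂f/∂λᵢ(λ) ≤ C` for some `C > 0`,
then `∂f/∂λᵢ(λ) ≥ 1/(N₁ C^{N₂})` for every `i`. -/
def ConditionN {n : ℕ} (Γ : Set (Fin n → ℝ)) (f : (Fin n → ℝ) → ℝ) (N₁ N₂ : ℝ) : Prop :=
  ∀ lam ∈ Γ, f lam = 1 → ∀ C : ℝ, 0 < C → (∑ i, fpd f i lam) ≤ C →
    ∀ i, 1 / (N₁ * C ^ N₂) ≤ fpd f i lam

/-- The Hessian matrix `D²u(x)`. -/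
def hessianMatrix {n : ℕ} (u : EuclideanSpace ℝ (Fin n) → ℝ) (x : EuclideanSpace ℝ (Fin n)) :
    Matrix (Fin n) (Fin n) ℝ :=
  fun i j => iteratedFDeriv ℝ 2 u x ![EuclideanSpace.single i 1, EuclideanSpace.single j 1]

/-- The vector of eigenvalues `λ(D²u(x))` of the Hessian of `u` at `x`
(junk value `0` if the Hessian matrix fails to be symmetric). -/
def hessEigen {n : ℕ} (u : EuclideanSpace ℝ (Fin n) → ℝ) (x : EuclideanSpace ℝ (Fin n)) :
    Fin n → ℝ :=
  if h : (hessianMatrix u x).IsHermitian then h.eigenvalues else 0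

/-- Condition D for a solution `u` of `F(D²u) = 1` on a set `Ω`: at every point, if an
eigenvalue `λᵢ` of `D²u` exceeds `D₁` then `∂f/∂λᵢ(λ) ⬝ λᵢ ≤ D₂`. -/
def ConditionD {n : ℕ} (f : (Fin n → ℝ) → ℝ) (u : EuclideanSpace ℝ (Fin n) → ℝ)
    (Ω : Set (EuclideanSpace ℝ (Fin n))) (D₁ D₂ : ℝ) : Prop :=
  ∀ x ∈ Ω, ∀ i, D₁ < hessEigen u x i →
    fpd f i (hessEigen u x) * hessEigen u x i ≤ D₂

/-- The `k`-th elementary symmetric polynomial `σ_k` on `ℝⁿ`. -/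
def esymmF (n k : ℕ) (lam : Fin n → ℝ) : ℝ :=
  ∑ s ∈ (Finset.univ : Finset (Fin n)).powersetCard k, ∏ i ∈ s, lam i

/-- The Gårding cone `Γ_k = {λ : σ_j(λ) > 0, j = 1,…,k}`. -/
def GammaK (n k : ℕ) : Set (Fin n → ℝ) :=
  {lam | ∀ j : ℕ, 1 ≤ j → j ≤ k → 0 < esymmF n j lam}

/-- The cone `Γ̂_p` of vectors all of whose sums of `p` distinct coordinates are positive. -/
def GammaHat (n p : ℕ) : Set (Fin n → ℝ) :=
  {lam | ∀ s : Finset (Fin n), s.card = p → 0 < ∑ i ∈ s, lam i}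

/-- The `p`-Monge–Ampère operator `M_p(λ) = ∏_{i₁<⋯<i_p} (λ_{i₁} + ⋯ + λ_{i_p})`. -/
def pMA (n p : ℕ) (lam : Fin n → ℝ) : ℝ :=
  ∏ s ∈ (Finset.univ : Finset (Fin n)).powersetCard p, ∑ i ∈ s, lam i

/-- Quadratic growth: `u(x) ≥ C⁻¹|x|² − C` for some `C > 0`. -/
def QuadraticGrowth {n : ℕ} (u : EuclideanSpace ℝ (Fin n) → ℝ) : Prop :=
  ∃ C : ℝ, 0 < C ∧ ∀ x, C⁻¹ * ‖x‖ ^ 2 - C ≤ u x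

/-- `u` is a quadratic polynomial: `u(x) = ½ xᵀAx + b·x + c` with `A` symmetric. -/
def IsQuadraticPolynomial {n : ℕ} (u : EuclideanSpace ℝ (Fin n) → ℝ) : Prop :=
  ∃ (A : Matrix (Fin n) (Fin n) ℝ) (b : Fin n → ℝ) (c : ℝ), A.IsSymm ∧
    ∀ x, u x = (1 / 2) * (∑ i, ∑ j, A i j * x i * x j) + (∑ i, b i * x i) + c

/-- **Proposition (domination implies condition N).** If a concave elliptic Hessian operator
`f` on a convex invariant cone `Γ` satisfies `f(λ+τ) ≥ f(λ) + d (τ₁⋯τₙ)^{1/n}` for all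
`λ ∈ Γ`, `τ ∈ Γₙ`, then for every `λ ∈ Γ` with `f(λ) = 1` and every `C > 0` with
`Σ_k ∂f/∂λ_k(λ) ≤ C` one has `∂f/∂λᵢ(λ) ≥ 1/((2/d)ⁿ C^{n−1})` for every `i`;
in particular `f` satisfies condition N with `N₁ = (2/d)ⁿ` and `N₂ = n−1`. -/
theorem domination_implies_condition_N (n : ℕ) (hn : 1 ≤ n)
    (Γ : Set (Fin n → ℝ)) (f : (Fin n → ℝ) → ℝ)
    (hΓ : IsConvexInvariantCone Γ) (hf : IsConcaveEllipticHessianOp Γ f)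
    (d : ℝ) (hd : 0 < d)
    (hdom : ∀ lam ∈ Γ, ∀ tau ∈ PosOrthant n,
      f lam + d * (∏ i, tau i) ^ (1 / (n : ℝ)) ≤ f (lam + tau)) :
    (∀ lam ∈ Γ, f lam = 1 → ∀ C : ℝ, 0 < C → (∑ k, fpd f k lam) ≤ C →
      ∀ i, 1 / ((2 / d) ^ n * C ^ (n - 1)) ≤ fpd f i lam) ∧
    ConditionN Γ f ((2 / d) ^ n) ((n : ℝ) - 1) := by
  obtain ⟨m, rfl⟩ : ∃ m, n = m + 1 := ⟨n - 1, (Nat.succ_pred_eq_of_pos hn).symm⟩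
  obtain ⟨hopen, -, hconv, hcone, haddΓ, -⟩ := hΓ
  obtain ⟨hsmooth, hconc, -, hell, -, -⟩ := hf
  have hn0 : ((m + 1) : ℝ) ≠ 0 := by positivity
  have main : ∀ lam ∈ Γ, f lam = 1 → ∀ C : ℝ, 0 < C → (∑ k, fpd f k lam) ≤ C →
      ∀ i, 1 / ((2 / d) ^ (m + 1) * C ^ ((m + 1) - 1)) ≤ fpd f i lam := by
    intro lam hlam hflam C hC hsum i
    have hdf : DifferentiableAt ℝ f lam :=
      (hsmooth.contDiffAt (hopen.mem_nhds hlam)).differentiableAt two_ne_zero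
    -- gradient inequality: d * (∏ τ)^(1/(m + 1)) ≤ ∑ τ_k ∂f/∂λ_k
    have grad : ∀ tau ∈ PosOrthant (m + 1),
        d * (∏ j, tau j) ^ (1 / ((m + 1) : ℝ)) ≤ ∑ k, tau k * fpd f k lam := by
      intro tau htau
      set L : ℝ → (Fin (m + 1) → ℝ) := fun t => lam + t • tau with hLdef
      have hmem : ∀ t : ℝ, 0 ≤ t → L t ∈ Γ := by
        intro t ht
        rcases ht.lt_or_eq with h | h
        · exact haddΓ lam hlam (t • tau)
            (fun j => by simpa using mul_pos h (htau j))
        · simp only [L, ← h, zero_smul, add_zero]; exact hlam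
      have hgc : ConcaveOn ℝ (Set.Ici (0:ℝ)) (f ∘ L) := by
        refine ⟨convex_Ici 0, ?_⟩
        intro x hx y hy a b ha hb hab
        have h1 := hconc.2 (hmem x hx) (hmem y hy) ha hb hab
        have h2 : a • L x + b • L y = L (a • x + b • y) := by
          funext j
          simp only [L, Pi.add_apply, Pi.smul_apply, smul_eq_mul]
          linear_combination lam j * hab
        simpa [h2] using h1
      have hL' : HasDerivAt L tau 0 := by
        simpa [L] using ((hasDerivAt_id (0:ℝ)).smul_const tau).const_add lam
      have hL0 : L 0 = lam := by simp [L]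
      have hg' : HasDerivAt (f ∘ L) (fderiv ℝ f lam tau) 0 := by
        refine HasFDerivAt.comp_hasDerivAt 0 ?_ hL'
        rw [hL0]; exact hdf.hasFDerivAt
      have hslope : f (L 1) - f (L 0) ≤ fderiv ℝ f lam tau := by
        have hneg := hgc.neg.le_slope_of_hasDerivAt (Set.self_mem_Ici)
          (Set.mem_Ici.mpr zero_le_one) zero_lt_one hg'.neg
        rw [slope_def_field] at hneg
        simp only [Pi.neg_apply, Function.comp_apply] at hneg
        have : (-(f (L 1)) - -(f (L 0))) / (1 - 0) = -(f (L 1) - f (L 0)) := by ring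
        rw [this] at hneg
        linarith
      have hexp : fderiv ℝ f lam tau = ∑ k, tau k * fpd f k lam := by
        have htau' : tau = ∑ k, tau k • (Pi.single k 1 : Fin (m + 1) → ℝ) := by
          funext j
          simp [Pi.single_apply, Finset.sum_apply]
        conv_lhs => rw [htau']
        rw [map_sum]
        simp [fpd, smul_eq_mul]
      have hdom' := hdom lam hlam tau htau
      have hL1 : L 1 = lam + tau := by simp [L]
      rw [hL1] at hslope
      rw [hL0] at hslope
      rw [hexp] at hslope
      push_cast at hdom' ⊢
      linarith
    -- apply with a specific τ
    set p := fpd f i lam with hpdef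
    have hp : 0 < p := hell lam hlam i
    have hx : (0:ℝ) < 2 * C / d := by positivity
    set t0 : ℝ := (2 * C / d) ^ (m + 1) with ht0def
    have ht0 : 0 < t0 := pow_pos hx (m + 1)
    set tau : Fin (m + 1) → ℝ := fun j => if j = i then t0 else 1 with htaudef
    have htau : tau ∈ PosOrthant (m + 1) := by
      intro j
      by_cases h : j = i <;> simp [tau, h, ht0]
    have hprod : (∏ j, tau j) = t0 := by
      simp [tau, Finset.prod_ite_eq']
    have hrpow : t0 ^ (1 / ((m + 1) : ℝ)) = 2 * C / d := by
      rw [ht0def, ← Real.rpow_natCast (2 * C / d) (m + 1), ← Real.rpow_mul hx.le]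
      push_cast
      rw [mul_one_div, div_self hn0, Real.rpow_one]
    have hsum2 : (∑ k, tau k * fpd f k lam) = (t0 - 1) * p + ∑ k, fpd f k lam := by
      have e : ∀ k ∈ Finset.univ, tau k * fpd f k lam =
          (if k = i then (t0 - 1) * p else 0) + fpd f k lam := by
        intro k _
        by_cases h : k = i
        · subst h
          have hk : tau k = t0 := if_pos rfl
          rw [hk, if_pos rfl, hpdef]
          ring
        · have hk : tau k = 1 := if_neg h
          rw [hk, if_neg h]
          ring
      rw [Finset.sum_congr rfl e, Finset.sum_add_distrib,
        Finset.sum_ite_eq' Finset.univ i]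
      simp
    have key := grad tau htau
    rw [hprod, hrpow, hsum2] at key
    have hdC : d * (2 * C / d) = 2 * C := by field_simp
    rw [hdC] at key
    -- 2C ≤ (t0-1)p + Σ ≤ t0 p + C, hence C/t0 ≤ p
    have h1 : (t0 - 1) * p = t0 * p - p := by ring
    have hCle : C ≤ t0 * p := by linarith
    have hfin : C / t0 ≤ p := (div_le_iff₀ ht0).mpr (by linarith [hCle])
    have heq : 1 / ((2 / d) ^ (m + 1) * C ^ ((m + 1) - 1)) = C / t0 := by
      rw [ht0def]
      have hCne : C ≠ 0 := hC.ne'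
      have hdne : d ≠ 0 := hd.ne'
      simp only [Nat.add_sub_cancel]
      rw [div_pow, div_pow]
      field_simp
      ring
    rw [heq]
    exact hfin
  refine ⟨main, ?_⟩
  intro lam hlam hflam C hC hsum i
  have h := main lam hlam hflam C hC hsum i
  have hexp : ((m + 1 : ℕ) : ℝ) - 1 = ((m : ℕ) : ℝ) := by push_cast; ring
  rw [hexp, Real.rpow_natCast]
  simpa using h
end
end

section
/- Let n ≥ 1, let Γ ⊆ ℝⁿ be a convex invariant cone and let f be a concave elliptic Hessian operator on Γ. Let λ ∈ Γ with f(λ) = 1, let R > 0 and let i ∈ {1,…,n} be such that the vector obtained from λ by replacing its i-th coordinate with R belongs to Γ. If λᵢ ≥ 2R, then ∂f/∂λᵢ(λ) · λᵢ ≤ 2. Consequently, if an admissible function u satisfies F(D²u) = 1 and condition CNS with parameter R, then u satisfies condition D with constants D₁ = 2R and D₂ = 2. -/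
open scoped BigOperators

noncomputable section

/-- Condition CNS with parameter `R`: at every point, replacing any single eigenvalue of the
Hessian by `R` keeps the vector of eigenvalues in `Γ`. -/
def ConditionCNS {n : ℕ} (Γ : Set (Fin n → ℝ)) (u : EuclideanSpace ℝ (Fin n) → ℝ)
    (Ω : Set (EuclideanSpace ℝ (Fin n))) (R : ℝ) : Prop :=
  ∀ x ∈ Ω, ∀ i : Fin n, Function.update (hessEigen u x) i R ∈ Γ


section
variable {n : ℕ} {Γ : Set (Fin n → ℝ)} {f : (Fin n → ℝ) → ℝ}

/-- Gradient inequality for a concave differentiable function on an open convex set. -/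
lemma concave_grad_ineq (hopen : IsOpen Γ) (hconc : ConcaveOn ℝ Γ f)
    (hcd : ContDiffOn ℝ 2 f Γ) {lam mu : Fin n → ℝ} (hlam : lam ∈ Γ) (hmu : mu ∈ Γ) :
    f mu ≤ f lam + fderiv ℝ f lam (mu - lam) := by
  have hdiff : DifferentiableAt ℝ f lam :=
    ((hcd.differentiableOn (by norm_num)) lam hlam).differentiableAt (hopen.mem_nhds hlam)
  set L : ℝ →ᵃ[ℝ] (Fin n → ℝ) := AffineMap.lineMap lam mu with hL
  have hg : ConcaveOn ℝ (L ⁻¹' Γ) (f ∘ L) := hconc.comp_affineMap L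
  have h0 : (0 : ℝ) ∈ L ⁻¹' Γ := by simp [hL, AffineMap.lineMap_apply_zero, hlam]
  have h1 : (1 : ℝ) ∈ L ⁻¹' Γ := by simp [hL, AffineMap.lineMap_apply_one, hmu]
  have hcurve : HasDerivAt (fun t : ℝ => L t) (mu - lam) 0 := by
    have : (fun t : ℝ => L t) = fun t : ℝ => t • (mu - lam) + lam := by
      funext t; simp [hL, AffineMap.lineMap_apply]
    rw [this]
    simpa using ((hasDerivAt_id (0:ℝ)).smul_const (mu - lam)).add_const lam
  have hgd : HasDerivAt (f ∘ L) (fderiv ℝ f lam (mu - lam)) 0 := by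
    have h0eq : (L (0:ℝ)) = lam := by simp [hL]
    have hdiff' : HasFDerivAt f (fderiv ℝ f lam) (L (0:ℝ)) := h0eq ▸ hdiff.hasFDerivAt
    exact hdiff'.comp_hasDerivAt 0 hcurve
  have hs := hg.slope_le_of_hasDerivAt h0 h1 one_pos hgd
  have : slope (f ∘ L) 0 1 = f mu - f lam := by
    simp [slope, hL, AffineMap.lineMap_apply_zero, AffineMap.lineMap_apply_one]
  rw [this] at hs
  linarith

end

/-- **Proposition (condition CNS implies condition D).** If `λ ∈ Γ`, `f(λ) = 1`, `R > 0`,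
and the vector obtained from `λ` by replacing its `i`-th coordinate with `R` lies in `Γ`,
then `λᵢ ≥ 2R` implies `∂f/∂λᵢ(λ)·λᵢ ≤ 2`. Consequently, an admissible solution of
`F(D²u) = 1` satisfying condition CNS with parameter `R` satisfies condition D with
`D₁ = 2R` and `D₂ = 2`. -/
theorem cns_implies_D (n : ℕ) (hn : 1 ≤ n)
    (Γ : Set (Fin n → ℝ)) (f : (Fin n → ℝ) → ℝ)
    (hΓ : IsConvexInvariantCone Γ) (hf : IsConcaveEllipticHessianOp Γ f) :
    (∀ lam ∈ Γ, f lam = 1 → ∀ R : ℝ, 0 < R → ∀ i : Fin n,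
      Function.update lam i R ∈ Γ → 2 * R ≤ lam i → fpd f i lam * lam i ≤ 2) ∧
    (∀ R : ℝ, 0 < R →
      ∀ (Ω : Set (EuclideanSpace ℝ (Fin n))) (u : EuclideanSpace ℝ (Fin n) → ℝ),
        (∀ x ∈ Ω, hessEigen u x ∈ Γ) →
        (∀ x ∈ Ω, f (hessEigen u x) = 1) →
        ConditionCNS Γ u Ω R →
        ConditionD f u Ω (2 * R) 2) := by
  obtain ⟨hopen, -, hconv, -, -, -⟩ := hΓ
  obtain ⟨hcd, hconc, -, hell, hpos, -⟩ := hf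
  have part1 : ∀ lam ∈ Γ, f lam = 1 → ∀ R : ℝ, 0 < R → ∀ i : Fin n,
      Function.update lam i R ∈ Γ → 2 * R ≤ lam i → fpd f i lam * lam i ≤ 2 := by
    intro lam hlam hflam R hR i hmu hRlam
    have hgi := concave_grad_ineq hopen hconc hcd hlam hmu
    have hdsub : Function.update lam i R - lam = (R - lam i) • (Pi.single i 1 : Fin n → ℝ) := by
      funext j
      by_cases hj : j = i
      · subst hj; simp [Function.update]
      · simp [Function.update, hj]
    rw [hdsub, (fderiv ℝ f lam).map_smul] at hgi
    have hgi' : f (Function.update lam i R) ≤ 1 + (R - lam i) * fpd f i lam := by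
      rw [hflam] at hgi; simpa [fpd, smul_eq_mul] using hgi
    have hfmu : 0 < f (Function.update lam i R) := hpos _ hmu
    have hp : 0 < fpd f i lam := hell lam hlam i
    nlinarith [mul_le_mul_of_nonneg_left hRlam hp.le]
  refine ⟨part1, ?_⟩
  intro R hR Ω u hadm hsol hcns x hx i hlt
  exact part1 _ (hadm x hx) (hsol x hx) R hR i (hcns x hx i) hlt.le
end
end

section
/- Let n ≥ 2, 1 ≤ k ≤ n−1 and A > 0. Suppose λ = (λ₁,…,λₙ) ∈ Γ_k ⊆ ℝⁿ satisfies σ_{k+1}(λ) > −A·σ_k(λ). Then for every R > A, the vector (λ₁,…,λ_{n−1}, R) belongs to Γ_k; by permutation invariance of Γ_k, the same holds when any single coordinate of λ is replaced by R. -/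
open scoped BigOperators

noncomputable section

namespace GKAux
open Polynomial

def es {ι : Type*} (t : Finset ι) (j : ℕ) (f : ι → ℝ) : ℝ :=
  ∑ s ∈ t.powersetCard j, ∏ i ∈ s, f i

variable {ι : Type*}

lemma es_zero (t : Finset ι) (f : ι → ℝ) : es t 0 f = 1 := by
  simp [es]

lemma es_of_lt {t : Finset ι} {j : ℕ} (h : t.card < j) (f : ι → ℝ) : es t j f = 0 := by
  simp [es, Finset.powersetCard_eq_empty.2 h]

lemma es_insert [DecidableEq ι] {a : ι} {t : Finset ι} (ha : a ∉ t) (j : ℕ) (f : ι → ℝ) :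
    es (insert a t) (j + 1) f = es t (j + 1) f + f a * es t j f := by
  rw [es, Finset.powersetCard_succ_insert ha, Finset.sum_union, Finset.sum_image]
  · rw [es, es, Finset.mul_sum]
    congr 1
    refine Finset.sum_congr rfl fun s hs => ?_
    rw [Finset.mem_powersetCard] at hs
    rw [Finset.prod_insert (fun hc => ha (hs.1 hc))]
  · intro s hs u hu h
    rw [Finset.mem_coe, Finset.mem_powersetCard] at hs hu
    have hsa : a ∉ s := fun hc => ha (hs.1 hc)
    have hua : a ∉ u := fun hc => ha (hu.1 hc)
    rw [← Finset.erase_insert hsa, h, Finset.erase_insert hua]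
  · rw [Finset.disjoint_right]
    rintro s hs hs'
    rw [Finset.mem_image] at hs
    obtain ⟨u, hu, rfl⟩ := hs
    rw [Finset.mem_powersetCard] at hs'
    exact ha (hs'.1 (Finset.mem_insert_self a u))

lemma es_erase [DecidableEq ι] {i : ι} {t : Finset ι} (hi : i ∈ t) (j : ℕ) (f : ι → ℝ) :
    es t (j + 1) f = es (t.erase i) (j + 1) f + f i * es (t.erase i) j f := by
  conv_lhs => rw [← Finset.insert_erase hi]
  exact es_insert (Finset.notMem_erase i t) j f

lemma es_congr {t : Finset ι} {f g : ι → ℝ} (h : ∀ i ∈ t, f i = g i) (j : ℕ) :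
    es t j f = es t j g := by
  refine Finset.sum_congr rfl fun s hs => Finset.prod_congr rfl fun i hi => ?_
  rw [Finset.mem_powersetCard] at hs
  exact h i (hs.1 hi)

lemma es_one (t : Finset ι) (j : ℕ) : es t j (fun _ => 1) = (t.card.choose j : ℝ) := by
  simp [es, Finset.card_powersetCard]

lemma es_single (t : Finset ι) (f : ι → ℝ) : es t 1 f = ∑ i ∈ t, f i := by
  rw [es, Finset.powersetCard_one, Finset.sum_map]
  simp

lemma es_smul (t : Finset ι) (j : ℕ) (c : ℝ) (f : ι → ℝ) :
    es t j (fun i => c * f i) = c ^ j * es t j f := by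
  rw [es, es, Finset.mul_sum]
  refine Finset.sum_congr rfl fun s hs => ?_
  rw [Finset.mem_powersetCard] at hs
  rw [Finset.prod_mul_distrib, Finset.prod_const, hs.2]

lemma es_esymm (t : Finset ι) (j : ℕ) (f : ι → ℝ) :
    (t.val.map f).esymm j = es t j f := Finset.esymm_map_val f t j


lemma es_compl [DecidableEq ι] (t : Finset ι) (j : ℕ) (hj : j ≤ t.card) (f : ι → ℝ)
    (hf : ∀ i ∈ t, f i ≠ 0) :
    es t (t.card - j) f = (∏ i ∈ t, f i) * es t j (fun i => (f i)⁻¹) := by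
  rw [es, es, Finset.mul_sum]
  refine Finset.sum_nbij' (fun s => t \ s) (fun s => t \ s) ?_ ?_ ?_ ?_ ?_
  · intro s hs
    rw [Finset.mem_powersetCard] at hs ⊢
    refine ⟨Finset.sdiff_subset, ?_⟩
    rw [Finset.card_sdiff_of_subset hs.1, hs.2]
    omega
  · intro s hs
    rw [Finset.mem_powersetCard] at hs ⊢
    refine ⟨Finset.sdiff_subset, ?_⟩
    rw [Finset.card_sdiff_of_subset hs.1, hs.2]
  · intro s hs
    rw [Finset.mem_powersetCard] at hs
    exact Finset.sdiff_sdiff_eq_self hs.1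
  · intro s hs
    rw [Finset.mem_powersetCard] at hs
    exact Finset.sdiff_sdiff_eq_self hs.1
  · intro s hs
    rw [Finset.mem_powersetCard] at hs
    have h1 : ∏ i ∈ t \ s, (f i)⁻¹ = (∏ i ∈ t \ s, f i)⁻¹ := by
      rw [← Finset.prod_inv_distrib]
    rw [h1]
    have h2 : (∏ i ∈ t \ s, f i) * (∏ i ∈ s, f i) = ∏ i ∈ t, f i :=
      Finset.prod_sdiff hs.1
    have h3 : (∏ i ∈ t \ s, f i) ≠ 0 := by
      refine Finset.prod_ne_zero_iff.2 fun i hi => hf i ?_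
      exact (Finset.mem_sdiff.1 hi).1
    field_simp
    linarith [h2]


lemma es_two [DecidableEq ι] (t : Finset ι) (f : ι → ℝ) :
    2 * es t 2 f = (∑ i ∈ t, f i) ^ 2 - ∑ i ∈ t, (f i) ^ 2 := by
  induction t using Finset.induction with
  | empty =>
    rw [es_of_lt (by simp : (∅ : Finset ι).card < 2)]
    simp
  | insert a t ha ih =>
    have h1 : es (insert a t) 2 f = es t 2 f + f a * es t 1 f := es_insert ha 1 f
    rw [h1, Finset.sum_insert ha, Finset.sum_insert ha, es_single]
    ring_nf
    ring_nf at ih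
    linarith [ih]

/-- Newton base case: for a finset of cardinality k+1. -/

lemma newton_base [DecidableEq ι] (t : Finset ι) (k : ℕ) (hk : 1 ≤ k) (hc : t.card = k + 1)
    (f : ι → ℝ) :
    2 * (k + 1 : ℝ) * (es t (k - 1) f * es t (k + 1) f) ≤ k * (es t k f) ^ 2 := by
  by_cases h0 : ∃ i ∈ t, f i = 0
  · obtain ⟨i, hi, hfi⟩ := h0
    have : es t (k + 1) f = 0 := by
      rw [← hc, es]
      rw [Finset.powersetCard_self, Finset.sum_singleton]
      exact Finset.prod_eq_zero hi hfi
    rw [this]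
    have : (0:ℝ) ≤ (k : ℝ) * (es t k f) ^ 2 := by positivity
    nlinarith
  · push_neg at h0
    set ν : ι → ℝ := fun i => (f i)⁻¹ with hν
    have hcompl : ∀ j ≤ t.card, es t (t.card - j) f = (∏ i ∈ t, f i) * es t j ν :=
      fun j hj => es_compl t j hj f h0
    have e1 : es t (k + 1) f = ∏ i ∈ t, f i := by
      rw [← hc, es, Finset.powersetCard_self, Finset.sum_singleton]
    have e2 : es t k f = (∏ i ∈ t, f i) * es t 1 ν := by
      have := hcompl 1 (by omega); rw [hc] at this
      simpa using this
    have e3 : es t (k - 1) f = (∏ i ∈ t, f i) * es t 2 ν := by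
      have := hcompl 2 (by omega); rw [hc] at this
      have h2 : k + 1 - 2 = k - 1 := by omega
      rw [h2] at this; exact this
    have hp2 : (0:ℝ) < (∏ i ∈ t, f i) ^ 2 := by
      have : (∏ i ∈ t, f i) ≠ 0 := Finset.prod_ne_zero_iff.2 h0
      positivity
    have hCS : (∑ i ∈ t, ν i) ^ 2 ≤ (k + 1 : ℝ) * ∑ i ∈ t, (ν i) ^ 2 := by
      have := sq_sum_le_card_mul_sum_sq (s := t) (f := ν)
      rw [hc] at this
      exact_mod_cast this
    have h2e : 2 * es t 2 ν = (∑ i ∈ t, ν i) ^ 2 - ∑ i ∈ t, (ν i) ^ 2 := es_two t ν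
    have key : (k + 1 : ℝ) * (2 * es t 2 ν) ≤ k * (∑ i ∈ t, ν i) ^ 2 := by
      nlinarith [hCS, h2e]
    rw [e1, e2, e3, es_single]
    nlinarith [mul_le_mul_of_nonneg_left key hp2.le]


lemma multiset_exists_fn (s : Multiset ℝ) :
    ∃ (m : ℕ) (f : Fin m → ℝ), m = Multiset.card s ∧ s = Finset.univ.val.map f := by
  refine ⟨s.toList.length, s.toList.get, Multiset.length_toList s, ?_⟩
  rw [Fin.univ_val_map, List.ofFn_get, Multiset.coe_toList]

/-- step: derivative of a real-rooted polynomial is real-rooted. -/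

lemma deriv_real_rooted {p : ℝ[X]} (h : Multiset.card p.roots = p.natDegree) :
    Multiset.card (derivative p).roots = (derivative p).natDegree ∧
      (derivative p).natDegree = p.natDegree - 1 := by
  rcases Nat.eq_zero_or_pos p.natDegree with h0 | h0
  · rw [derivative_of_natDegree_zero h0]
    simp [h0]
  · have hlb : p.natDegree - 1 ≤ Multiset.card (derivative p).roots := by
      have := p.card_roots_le_derivative
      omega
    have h1 : Multiset.card (derivative p).roots ≤ (derivative p).natDegree :=
      (derivative p).card_roots'
    have h2 : (derivative p).natDegree ≤ p.natDegree - 1 :=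
      Nat.le_sub_one_of_lt (natDegree_derivative_lt (by omega))
    omega

lemma iter_deriv_real_rooted (p : ℝ[X]) (h : Multiset.card p.roots = p.natDegree) (d : ℕ) :
    Multiset.card (derivative^[d] p).roots = (derivative^[d] p).natDegree ∧
      (derivative^[d] p).natDegree = p.natDegree - d := by
  induction d with
  | zero => simpa using h
  | succ d ih =>
    rw [Function.iterate_succ_apply']
    obtain ⟨ih1, ih2⟩ := ih
    obtain ⟨g1, g2⟩ := deriv_real_rooted ih1
    exact ⟨g1, by omega⟩




lemma newton (s : Multiset ℝ) {k : ℕ} (hk : 1 ≤ k) :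
    s.esymm (k - 1) * s.esymm (k + 1) ≤ s.esymm k ^ 2 := by
  by_cases hlt : Multiset.card s < k + 1
  · have h0 : s.esymm (k + 1) = 0 := by
      rw [Multiset.esymm, Multiset.powersetCard_eq_empty _ hlt]
      simp
    rw [h0, mul_zero]
    positivity
  push_neg at hlt
  set c := Multiset.card s with hcdef
  set d := c - (k + 1) with hddef
  set P : Polynomial ℝ := (s.map fun a => X - C a).prod with hPdef
  have hPdeg : P.natDegree = c := natDegree_multiset_prod_X_sub_C_eq_card s
  have hProots : P.roots = s := roots_multiset_prod_X_sub_C s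
  have hPm : P.Monic := monic_multiset_prod_of_monic _ _ fun a _ => monic_X_sub_C a
  obtain ⟨hQ1, hQ2⟩ := iter_deriv_real_rooted P (by rw [hProots, hPdeg]) d
  set Q := derivative^[d] P with hQdef
  have hQdeg : Q.natDegree = k + 1 := by rw [hQ2, hPdeg]; omega
  set r := Q.roots with hrdef
  have hrcard : Multiset.card r = k + 1 := by rw [hQ1, hQdeg]
  have hsplit : Q = C Q.leadingCoeff * (r.map fun a => X - C a).prod :=
    (C_leadingCoeff_mul_prod_multiset_X_sub_C hQ1).symm
  set L := Q.leadingCoeff with hLdef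
  have hLval : L = (c.descFactorial d : ℝ) := by
    have h1 : L = Q.coeff (k + 1) := by rw [hLdef, Polynomial.leadingCoeff, hQdeg]
    rw [h1, hQdef, Polynomial.coeff_iterate_derivative]
    have h2 : k + 1 + d = c := by omega
    rw [h2, ← hPdeg, hPm.coeff_natDegree, hPdeg, nsmul_eq_mul, mul_one]
  have hLpos : (0:ℝ) < L := by
    rw [hLval]
    have : c.descFactorial d ≠ 0 := by
      rw [Ne, Nat.descFactorial_eq_zero_iff_lt]
      omega
    exact_mod_cast Nat.pos_of_ne_zero this
  have key : ∀ j, j ≤ k + 1 → L * r.esymm j = ((c - j).descFactorial d : ℝ) * s.esymm j := by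
    intro j hj
    have e1 : Q.coeff (k + 1 - j) = ((k + 1 - j + d).descFactorial d : ℝ) * P.coeff (k + 1 - j + d) := by
      rw [hQdef, Polynomial.coeff_iterate_derivative, nsmul_eq_mul]
    have harg : k + 1 - j + d = c - j := by omega
    have e1' : Q.coeff (k + 1 - j) = ((c - j).descFactorial d : ℝ) * ((-1:ℝ)^j * s.esymm j) := by
      rw [e1, harg]
      congr 1
      have hle : c - j ≤ Multiset.card s := by omega
      rw [Multiset.prod_X_sub_C_coeff s hle]
      have h2 : Multiset.card s - (c - j) = j := by omega
      rw [h2]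
    have e2 : Q.coeff (k + 1 - j) = L * ((-1:ℝ)^j * r.esymm j) := by
      conv_lhs => rw [hsplit]
      rw [Polynomial.coeff_C_mul]
      have h1 : k + 1 - j ≤ Multiset.card r := by omega
      rw [Multiset.prod_X_sub_C_coeff r h1]
      have h2 : Multiset.card r - (k + 1 - j) = j := by rw [hrcard]; omega
      rw [h2]
    have hne : ((-1:ℝ)^j) ≠ 0 := pow_ne_zero _ (by norm_num)
    apply mul_left_cancel₀ hne
    calc ((-1:ℝ)^j) * (L * r.esymm j) = L * ((-1:ℝ)^j * r.esymm j) := by ring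
    _ = Q.coeff (k + 1 - j) := e2.symm
    _ = ((c - j).descFactorial d : ℝ) * ((-1:ℝ)^j * s.esymm j) := e1'
    _ = ((-1:ℝ)^j) * (((c - j).descFactorial d : ℝ) * s.esymm j) := by ring
  -- base inequality on r
  obtain ⟨m, f, hm, hfr⟩ := multiset_exists_fn r
  have hmval : m = k + 1 := by rw [hm, hrcard]
  have hcard_univ : (Finset.univ : Finset (Fin m)).card = k + 1 := by
    rw [Finset.card_univ, Fintype.card_fin, hmval]
  have hesr : ∀ j, r.esymm j = es (Finset.univ : Finset (Fin m)) j f := by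
    intro j
    rw [hfr, es_esymm]
  have hbase : 2 * (k + 1 : ℝ) * (r.esymm (k - 1) * r.esymm (k + 1)) ≤ k * (r.esymm k) ^ 2 := by
    rw [hesr, hesr, hesr]
    exact newton_base Finset.univ k hk hcard_univ f
  -- the D values
  set D : ℕ → ℝ := fun j => ((c - j).descFactorial d : ℝ) with hDdef
  have hDpos : ∀ j, j ≤ k + 1 → (0:ℝ) < D j := by
    intro j hj
    have h0 : (c - j).descFactorial d ≠ 0 := by
      rw [Ne, Nat.descFactorial_eq_zero_iff_lt]
      omega
    show (0:ℝ) < ((c - j).descFactorial d : ℝ)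
    exact_mod_cast Nat.pos_of_ne_zero h0
  -- numeric facts about the D values
  have hck1 : c - (k + 1) = d := by omega
  have hck : c - k = d + 1 := by omega
  have hck2 : c - (k - 1) = d + 2 := by omega
  have f1 : D (k + 1) = (d.factorial : ℝ) := by
    rw [hDdef]; simp only [hck1, Nat.descFactorial_self]
  have f2 : D k = (d.factorial : ℝ) * (d + 1) := by
    rw [hDdef]
    simp only [hck]
    rw [Nat.descFactorial_eq_factorial_mul_choose, Nat.choose_succ_self_right]
    push_cast
    ring
  have f3 : 2 * D (k - 1) = (d.factorial : ℝ) * ((d + 2) * (d + 1)) := by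
    have hsymm : (d + 2).choose d = (d + 2).choose 2 := by
      have h := Nat.choose_symm (show 2 ≤ d + 2 by omega)
      have hdd : d + 2 - 2 = d := by omega
      rwa [hdd] at h
    have hcast : ((d + 2).choose 2 : ℝ) = ((d:ℝ) + 2) * ((d:ℝ) + 1) / 2 := by
      rw [Nat.cast_choose_two]
      push_cast
      ring
    show 2 * ((c - (k - 1)).descFactorial d : ℝ) = _
    rw [hck2, Nat.descFactorial_eq_factorial_mul_choose, hsymm, Nat.cast_mul, hcast]
    ring
  have hD : (k : ℝ) * (D k) ^ 2 ≤ 2 * (k + 1) * (D (k - 1) * D (k + 1)) := by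
    have hfac2 : (0:ℝ) ≤ (d.factorial : ℝ)^2 := by positivity
    have hstep : (k:ℝ) * ((d:ℝ) + 1)^2 ≤ ((k:ℝ) + 1) * (((d:ℝ) + 2) * ((d:ℝ) + 1)) := by
      nlinarith [Nat.cast_nonneg (α := ℝ) d, Nat.cast_nonneg (α := ℝ) k,
        mul_nonneg (Nat.cast_nonneg (α := ℝ) d) (Nat.cast_nonneg (α := ℝ) k)]
    calc (k : ℝ) * (D k) ^ 2 = ((k:ℝ) * ((d:ℝ) + 1)^2) * (d.factorial : ℝ)^2 := by
          rw [f2]; ring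
    _ ≤ (((k:ℝ) + 1) * (((d:ℝ) + 2) * ((d:ℝ) + 1))) * (d.factorial : ℝ)^2 :=
          mul_le_mul_of_nonneg_right hstep hfac2
    _ = 2 * ((k:ℝ) + 1) * (D (k - 1) * D (k + 1)) := by
          rw [f1]
          linear_combination (-((k:ℝ) + 1)) * (d.factorial : ℝ) * f3
  have hmul : 2 * (k + 1 : ℝ) * ((L * r.esymm (k - 1)) * (L * r.esymm (k + 1)))
      ≤ (k : ℝ) * (L * r.esymm k) ^ 2 := by
    have h := mul_le_mul_of_nonneg_left hbase (sq_nonneg L)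
    calc 2 * (k + 1 : ℝ) * ((L * r.esymm (k - 1)) * (L * r.esymm (k + 1)))
        = L^2 * (2 * (k + 1 : ℝ) * (r.esymm (k - 1) * r.esymm (k + 1))) := by ring
    _ ≤ L^2 * ((k : ℝ) * (r.esymm k)^2) := h
    _ = (k : ℝ) * (L * r.esymm k) ^ 2 := by ring
  rw [key (k - 1) (by omega), key (k + 1) le_rfl, key k (by omega)] at hmul
  have hsq : (0:ℝ) ≤ s.esymm k ^ 2 := sq_nonneg _
  have hDD : (0:ℝ) < 2 * (k + 1) * (D (k - 1) * D (k + 1)) := by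
    have h1 := hDpos (k - 1) (by omega)
    have h2 := hDpos (k + 1) le_rfl
    positivity
  -- hmul : 2(k+1) * (D(k-1) e_{k-1} * (D(k+1) e_{k+1})) ≤ k * (D k e_k)^2
  have step : 2 * (k + 1 : ℝ) * (D (k - 1) * D (k + 1)) * (s.esymm (k - 1) * s.esymm (k + 1))
      ≤ 2 * (k + 1 : ℝ) * (D (k - 1) * D (k + 1)) * (s.esymm k ^ 2) := by
    calc 2 * (k + 1 : ℝ) * (D (k - 1) * D (k + 1)) * (s.esymm (k - 1) * s.esymm (k + 1))
        = 2 * (k + 1 : ℝ) * ((D (k - 1) * s.esymm (k - 1)) * (D (k + 1) * s.esymm (k + 1))) := by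
          ring
    _ ≤ (k : ℝ) * (D k * s.esymm k) ^ 2 := hmul
    _ = (k : ℝ) * (D k) ^ 2 * (s.esymm k ^ 2) := by ring
    _ ≤ 2 * (k + 1 : ℝ) * (D (k - 1) * D (k + 1)) * (s.esymm k ^ 2) :=
        mul_le_mul_of_nonneg_right hD hsq
  exact le_of_mul_le_mul_left (by linarith [step]) hDD


lemma count_supersets [DecidableEq ι] {t v : Finset ι} (hv : v ⊆ t) {j : ℕ} (hm : v.card ≤ j) :
    ((t.powersetCard j).filter (fun u => v ⊆ u)).card
      = (t.card - v.card).choose (j - v.card) := by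
  rw [← Finset.card_sdiff_of_subset hv, ← Finset.card_powersetCard (j - v.card) (t \ v)]
  apply Finset.card_bij (fun u _ => u \ v)
  · intro u hu
    rw [Finset.mem_filter, Finset.mem_powersetCard] at hu
    rw [Finset.mem_powersetCard]
    refine ⟨Finset.sdiff_subset_sdiff hu.1.1 le_rfl, ?_⟩
    rw [Finset.card_sdiff_of_subset hu.2, hu.1.2]
  · intro u1 hu1 u2 hu2 h
    rw [Finset.mem_filter] at hu1 hu2
    rw [← Finset.sdiff_union_of_subset hu1.2, h, Finset.sdiff_union_of_subset hu2.2]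
  · intro w hw
    rw [Finset.mem_powersetCard] at hw
    refine ⟨w ∪ v, ?_, ?_⟩
    · rw [Finset.mem_filter, Finset.mem_powersetCard]
      have hdisj : Disjoint w v := by
        refine Finset.disjoint_left.2 fun a haw hav => ?_
        exact (Finset.mem_sdiff.1 (hw.1 haw)).2 hav
      refine ⟨⟨Finset.union_subset ((hw.1).trans Finset.sdiff_subset) hv, ?_⟩,
        Finset.subset_union_right⟩
      rw [Finset.card_union_of_disjoint hdisj, hw.2]
      omega
    · have hdisj : Disjoint w v := by
        refine Finset.disjoint_left.2 fun a haw hav => ?_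
        exact (Finset.mem_sdiff.1 (hw.1 haw)).2 hav
      exact Finset.union_sdiff_cancel_right hdisj

lemma es_shift [DecidableEq ι] (t : Finset ι) {j : ℕ} (hj : j ≤ t.card) (f : ι → ℝ) (x : ℝ) :
    es t j (fun i => f i + x)
      = ∑ m ∈ Finset.range (j + 1),
          ((t.card - m).choose (j - m) : ℝ) * x ^ (j - m) * es t m f := by
  have step1 : es t j (fun i => f i + x)
      = ∑ u ∈ t.powersetCard j, ∑ v ∈ u.powerset, (∏ i ∈ v, f i) * x ^ (j - v.card) := by
    rw [es]
    refine Finset.sum_congr rfl fun u hu => ?_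
    rw [Finset.mem_powersetCard] at hu
    rw [Finset.prod_add]
    refine Finset.sum_congr rfl fun v hv => ?_
    rw [Finset.mem_powerset] at hv
    rw [Finset.prod_const, Finset.card_sdiff_of_subset hv, hu.2]
  have step2 : (∑ u ∈ t.powersetCard j, ∑ v ∈ u.powerset, (∏ i ∈ v, f i) * x ^ (j - v.card))
      = ∑ v ∈ t.powerset, ∑ _u ∈ (t.powersetCard j).filter (fun u => v ⊆ u),
          (∏ i ∈ v, f i) * x ^ (j - v.card) := by
    refine Finset.sum_comm' ?_
    intro u v
    simp only [Finset.mem_powersetCard, Finset.mem_powerset, Finset.mem_filter]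
    constructor
    · rintro ⟨⟨h1, h2⟩, h3⟩
      exact ⟨⟨⟨h1, h2⟩, h3⟩, h3.trans h1⟩
    · rintro ⟨⟨⟨h1, h2⟩, h3⟩, h4⟩
      exact ⟨⟨h1, h2⟩, h3⟩
  have step3 : (∑ v ∈ t.powerset, ∑ _u ∈ (t.powersetCard j).filter (fun u => v ⊆ u),
          (∏ i ∈ v, f i) * x ^ (j - v.card))
      = ∑ v ∈ t.powerset, (((t.powersetCard j).filter (fun u => v ⊆ u)).card : ℝ) *
          ((∏ i ∈ v, f i) * x ^ (j - v.card)) := by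
    refine Finset.sum_congr rfl fun v _ => ?_
    rw [Finset.sum_const, nsmul_eq_mul]
  rw [step1, step2, step3]
  rw [Finset.powerset_card_disjiUnion]
  erw [Finset.sum_disjiUnion]
  have hsplit : ∀ m ∈ Finset.range (t.card + 1),
      (∑ v ∈ t.powersetCard m, (((t.powersetCard j).filter (fun u => v ⊆ u)).card : ℝ) *
          ((∏ i ∈ v, f i) * x ^ (j - v.card)))
      = (if m ≤ j then ((t.card - m).choose (j - m) : ℝ) * x ^ (j - m) * es t m f else 0) := by
    intro m hm
    by_cases hmj : m ≤ j
    · rw [if_pos hmj, es, Finset.mul_sum]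
      refine Finset.sum_congr rfl fun v hv => ?_
      rw [Finset.mem_powersetCard] at hv
      rw [count_supersets hv.1 (by omega : v.card ≤ j), hv.2]
      ring
    · rw [if_neg hmj]
      refine Finset.sum_eq_zero fun v hv => ?_
      rw [Finset.mem_powersetCard] at hv
      have : (t.powersetCard j).filter (fun u => v ⊆ u) = ∅ := by
        refine Finset.filter_eq_empty_iff.2 fun u hu => ?_
        rw [Finset.mem_powersetCard] at hu
        intro hvu
        have := Finset.card_le_card hvu
        omega
      rw [this]
      simp
  rw [Finset.sum_congr rfl hsplit]
  rw [← Finset.sum_subset (Finset.range_subset_range.2 (by omega : j + 1 ≤ t.card + 1))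
    (fun m hm hnot => by
      rw [Finset.mem_range] at hm hnot
      rw [if_neg (by omega)])]
  refine Finset.sum_congr rfl fun m hm => ?_
  rw [Finset.mem_range] at hm
  rw [if_pos (by omega)]




lemma esymmF_eq (n j : ℕ) (lam : Fin n → ℝ) : esymmF n j lam = es Finset.univ j lam := rfl

lemma gammaK_segment {n k : ℕ} (hkn : k ≤ n) {lam : Fin n → ℝ}
    (hlam : lam ∈ GammaK n k) {t : ℝ} (ht0 : 0 ≤ t) (ht1 : t ≤ 1) :
    (fun x => (1 - t) * lam x + t) ∈ GammaK n k := by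
  have hcard : (Finset.univ : Finset (Fin n)).card = n := by simp
  intro j hj1 hjk
  rw [esymmF_eq]
  by_cases h1 : t = 1
  · subst h1
    have hfun : (fun x : Fin n => (1 - 1) * lam x + 1) = (fun _ : Fin n => (1:ℝ)) := by
      funext x; ring
    rw [hfun, es_one, hcard]
    exact_mod_cast Nat.choose_pos (by omega)
  · have h1t : 0 < 1 - t := by
      rcases lt_or_eq_of_le ht1 with h | h
      · linarith
      · exact absurd h h1
    have hfun : (fun x : Fin n => (1 - t) * lam x + t)
        = (fun x : Fin n => (1 - t) * (lam x + t / (1 - t))) := by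
      funext x
      field_simp
    rw [hfun, es_smul, es_shift Finset.univ (by omega : j ≤ (Finset.univ : Finset (Fin n)).card)]
    have hx : 0 ≤ t / (1 - t) := div_nonneg ht0 h1t.le
    have hsum : 0 < ∑ m ∈ Finset.range (j + 1),
        (((Finset.univ : Finset (Fin n)).card - m).choose (j - m) : ℝ) * (t / (1 - t)) ^ (j - m)
          * es Finset.univ m lam := by
      refine Finset.sum_pos' ?_ ⟨j, Finset.self_mem_range_succ j, ?_⟩
      · intro m hm
        rw [Finset.mem_range] at hm
        have hes : 0 ≤ es Finset.univ m lam := by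
          rcases Nat.eq_zero_or_pos m with rfl | hm1
          · rw [es_zero]; norm_num
          · exact (hlam m hm1 (by omega)).le
        positivity
      · have h0 : j - j = 0 := by omega
        rw [h0, pow_zero, Nat.choose_zero_right]
        have hes : 0 < es Finset.univ j lam := hlam j hj1 hjk
        simpa using hes
    positivity

lemma minor_pos {n : ℕ} (hn : 2 ≤ n) :
    ∀ k, 1 ≤ k → k ≤ n - 1 → ∀ lam ∈ GammaK n k, ∀ i : Fin n,
      0 < es (Finset.univ.erase i) (k - 1) lam := by
  intro k
  induction k using Nat.strong_induction_on with
  | _ k IH =>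
    intro hk1 hkn lam hlam i
    have hcard : (Finset.univ.erase i).card = n - 1 := by
      rw [Finset.card_erase_of_mem (Finset.mem_univ i), Finset.card_univ, Fintype.card_fin]
    rcases eq_or_lt_of_le hk1 with h1 | hk2
    · rw [← h1, es_zero]; norm_num
    by_contra hneg
    rw [not_lt] at hneg
    set g : ℝ → ℝ := fun t => es (Finset.univ.erase i) (k - 1) (fun x => (1 - t) * lam x + t)
      with hgdef
    have hgc : Continuous g := by
      apply continuous_finset_sum
      intro s _
      apply continuous_finset_prod
      intro x _
      fun_prop
    have hg0 : g 0 ≤ 0 := by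
      have hfun : (fun x : Fin n => (1 - 0) * lam x + 0) = lam := by funext x; ring
      show es _ _ _ ≤ 0
      rw [hfun]
      exact hneg
    have hg1 : 0 < g 1 := by
      have hfun : (fun x : Fin n => (1 - 1) * lam x + 1) = (fun _ : Fin n => (1:ℝ)) := by
        funext x; ring
      show (0:ℝ) < es _ _ _
      rw [hfun, es_one, hcard]
      have : 0 < (n - 1).choose (k - 1) := Nat.choose_pos (by omega)
      exact_mod_cast this
    have hivt := intermediate_value_Icc (by norm_num : (0:ℝ) ≤ 1) hgc.continuousOn
    have h0mem : (0:ℝ) ∈ Set.Icc (g 0) (g 1) := ⟨hg0, hg1.le⟩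
    obtain ⟨t₀, ht₀, hgt₀⟩ := hivt h0mem
    set μ : Fin n → ℝ := fun x => (1 - t₀) * lam x + t₀ with hμdef
    have hμ : μ ∈ GammaK n k := gammaK_segment (by omega) hlam ht₀.1 ht₀.2
    have hminor : 0 < es (Finset.univ.erase i) (k - 2) μ := by
      have hμ' : μ ∈ GammaK n (k - 1) := fun j hj1 hjk => hμ j hj1 (by omega)
      have := IH (k - 1) (by omega) (by omega) (by omega) μ hμ' i
      have harith : k - 1 - 1 = k - 2 := by omega
      rwa [harith] at this
    have hnewton := newton ((Finset.univ.erase i).val.map μ) (k := k - 1) (by omega)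
    rw [es_esymm, es_esymm, es_esymm] at hnewton
    have h11 : k - 1 - 1 = k - 2 := by omega
    have h12 : k - 1 + 1 = k := by omega
    rw [h11, h12] at hnewton
    have hmid : es (Finset.univ.erase i) (k - 1) μ = 0 := hgt₀
    rw [hmid] at hnewton
    have hesk : es (Finset.univ.erase i) k μ ≤ 0 := by nlinarith [hminor, hnewton]
    have hsigma : esymmF n k μ = es (Finset.univ.erase i) k μ
        + μ i * es (Finset.univ.erase i) (k - 1) μ := by
      have hk' : k = (k - 1) + 1 := by omega
      conv_lhs => rw [esymmF_eq, hk', es_erase (Finset.mem_univ i)]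
      rw [← hk']
    have hpos := hμ k hk1 le_rfl
    rw [hsigma, hmid, mul_zero, add_zero] at hpos
    linarith


theorem gammaK_update' (n k : ℕ) (hn : 2 ≤ n) (hk1 : 1 ≤ k) (hk2 : k ≤ n - 1)
    (A : ℝ) (hA : 0 < A) (lam : Fin n → ℝ) (hlam : lam ∈ GammaK n k)
    (hsig : -A * esymmF n k lam < esymmF n (k + 1) lam)
    (R : ℝ) (hR : A < R) :
    ∀ i : Fin n, Function.update lam i R ∈ GammaK n k := by
  intro i
  set e : Finset (Fin n) := Finset.univ.erase i with hedef
  have hmem : i ∈ (Finset.univ : Finset (Fin n)) := Finset.mem_univ i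
  have hdec : ∀ (h : Fin n → ℝ) (j : ℕ),
      esymmF n (j + 1) h = es e (j + 1) h + h i * es e j h := by
    intro h j
    rw [esymmF_eq]
    exact es_erase hmem j h
  have hupd : ∀ j, es e j (Function.update lam i R) = es e j lam := by
    intro j
    exact es_congr (fun x hx => Function.update_of_ne (Finset.ne_of_mem_erase hx) R lam) j
  have hS : ∀ m, m ≤ k - 1 → 0 < es e m lam := by
    intro m hm
    rcases Nat.eq_zero_or_pos m with rfl | hm1
    · rw [es_zero]; norm_num
    · have h := minor_pos hn (m + 1) (by omega) (by omega)
        lam (fun j hj1 hjk => hlam j hj1 (by omega)) i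
      simpa using h
  intro j hj1 hjk
  obtain ⟨j', rfl⟩ : ∃ j', j = j' + 1 := ⟨j - 1, by omega⟩
  rw [hdec, hupd, hupd, Function.update_self]
  rcases lt_or_eq_of_le hjk with hlt | heq
  · have h1 := hS (j' + 1) (by omega)
    have h2 := hS j' (by omega)
    have hR0 : 0 < R := by linarith
    nlinarith
  · by_contra hcon
    rw [not_lt] at hcon
    set a := es e j' lam with hadef
    set b := es e (j' + 1) lam with hbdef
    set cz := es e (j' + 2) lam with hczdef
    set L := lam i with hLdef
    have ha : 0 < a := hS j' (by omega)
    have hσk : 0 < b + L * a := by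
      have := hlam (j' + 1) (by omega) hjk
      rw [hdec] at this
      exact this
    have hsig' : -A * (b + L * a) < cz + L * b := by
      rw [← heq] at hsig
      rw [hdec lam j'] at hsig
      have h2 : j' + 1 + 1 = j' + 2 := by omega
      rw [h2, hdec lam (j' + 1)] at hsig
      exact hsig
    have hnewton := newton (e.val.map lam) (k := j' + 1) (by omega)
    rw [es_esymm, es_esymm, es_esymm] at hnewton
    have h11 : j' + 1 - 1 = j' := by omega
    have h12 : j' + 1 + 1 = j' + 2 := by omega
    rw [h11, h12] at hnewton
    -- hnewton : a * cz ≤ b ^ 2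
    have hbneg : b < 0 := by nlinarith
    have hLa : -b < L * a := by linarith
    have h1 : 0 < -b - A * a := by nlinarith
    have hkey : (-b) * (-b - A * a) < (L * a) * (-b - A * a) :=
      mul_lt_mul_of_pos_right hLa h1
    have hcz : a * (-A * (b + L * a) - L * b) < a * cz := by
      have := mul_lt_mul_of_pos_left hsig' ha
      nlinarith [this]
    nlinarith [hnewton, hkey, hcz]

end GKAux

/-- **Proposition.** If `λ ∈ Γ_k` satisfies `σ_{k+1}(λ) > −A σ_k(λ)` then for every `R > A`
the vector `(λ₁,…,λ_{n−1},R)` belongs to `Γ_k`; by permutation invariance of `Γ_k` the same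
holds when any single coordinate of `λ` is replaced by `R`. -/
theorem gammaK_update (n k : ℕ) (hn : 2 ≤ n) (hk1 : 1 ≤ k) (hk2 : k ≤ n - 1)
    (A : ℝ) (hA : 0 < A) (lam : Fin n → ℝ) (hlam : lam ∈ GammaK n k)
    (hsig : -A * esymmF n k lam < esymmF n (k + 1) lam)
    (R : ℝ) (hR : A < R) :
    Function.update lam ⟨n - 1, by omega⟩ R ∈ GammaK n k ∧
    ∀ i : Fin n, Function.update lam i R ∈ GammaK n k := by
  have H := GKAux.gammaK_update' n k hn hk1 hk2 A hA lam hlam hsig R hR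
  exact ⟨H _, H⟩
end
end

section
/- Let n ≥ 2 and 1 ≤ k ≤ n−1. Let λ = (λ₁,…,λₙ) ∈ Γ_k ⊆ ℝⁿ and let λ' = (λ₁,…,λ_{n−1}) ∈ ℝ^{n−1}. Then σ_k(λ') · σ_k(λ) ≥ σ_{k−1}(λ') · σ_{k+1}(λ). Moreover σ_k(λ) > 0 and σ_{k−1}(λ') > 0, so that σ_k(λ')/σ_{k−1}(λ') ≥ σ_{k+1}(λ)/σ_k(λ). -/
open scoped BigOperators

noncomputable section

section AuxNewton
open Polynomial Finset

lemma esymmF_zero (n : ℕ) (x : Fin n → ℝ) : esymmF n 0 x = 1 := by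
  simp [esymmF]

lemma esymmF_of_gt {n k : ℕ} (h : n < k) (x : Fin n → ℝ) : esymmF n k x = 0 := by
  rw [esymmF, Finset.powersetCard_eq_empty.2 (by simpa using h), Finset.sum_empty]

lemma esymmF_ones (n j : ℕ) : esymmF n j (fun _ => (1:ℝ)) = (n.choose j : ℝ) := by
  simp [esymmF, Finset.card_powersetCard]

lemma esymmF_smul (n j : ℕ) (c : ℝ) (x : Fin n → ℝ) :
    esymmF n j (fun i => c * x i) = c ^ j * esymmF n j x := by
  rw [esymmF, esymmF, Finset.mul_sum]
  refine Finset.sum_congr rfl fun s hs => ?_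
  rw [Finset.prod_mul_distrib, Finset.prod_const,
    (Finset.mem_powersetCard.1 hs).2]

lemma esymmF_coeff (n : ℕ) (x : Fin n → ℝ) {c : ℕ} (hc : c ≤ n) :
    (∏ i : Fin n, (X + C (x i))).coeff c = esymmF n (n - c) x := by
  rw [Finset.prod_X_add_C_coeff _ _ (by simpa using hc)]
  simp [esymmF]

lemma esymmF_compl {N c r : ℕ} (h : c + r = N) (y : Fin N → ℝ) :
    esymmF N r y =
      ∑ S ∈ (Finset.univ : Finset (Fin N)).powersetCard c, ∏ i ∈ Finset.univ \ S, y i := by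
  rw [esymmF]
  refine Finset.sum_nbij' (fun S => Finset.univ \ S) (fun S => Finset.univ \ S) ?_ ?_ ?_ ?_ ?_
  · intro S hS
    rw [Finset.mem_powersetCard_univ] at hS ⊢
    rw [Finset.card_sdiff_of_subset (Finset.subset_univ S), Finset.card_univ, Fintype.card_fin, hS]
    omega
  · intro S hS
    rw [Finset.mem_powersetCard_univ] at hS ⊢
    rw [Finset.card_sdiff_of_subset (Finset.subset_univ S), Finset.card_univ, Fintype.card_fin, hS]
    omega
  · intro S _
    simp only [Finset.sdiff_sdiff_self_left, Finset.univ_inter]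
  · intro S _
    simp only [Finset.sdiff_sdiff_self_left, Finset.univ_inter]
  · intro S _
    simp only [Finset.sdiff_sdiff_self_left, Finset.univ_inter]

lemma pair_sum {α : Type*} [DecidableEq α] (h : Finset α → ℝ) (s : Finset α) :
    ∑ a ∈ s, ∑ b ∈ s.erase a, h {a, b} = 2 * ∑ T ∈ s.powersetCard 2, h T := by
  classical
  induction s using Finset.induction_on with
  | empty =>
    rw [show (Finset.powersetCard 2 (∅:Finset α)) = ∅ from
      Finset.powersetCard_eq_empty.2 (by simp)]
    simp
  | @insert x s hx ih =>
    rw [Finset.sum_insert hx, Finset.erase_insert hx]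
    have h1 : ∀ a ∈ s, ∑ b ∈ (insert x s).erase a, h {a, b}
        = h {a, x} + ∑ b ∈ s.erase a, h {a, b} := by
      intro a ha
      have hax : a ≠ x := fun e => hx (e ▸ ha)
      rw [Finset.erase_insert_of_ne (Ne.symm hax), Finset.sum_insert (by simp [hx])]
    rw [Finset.sum_congr rfl h1, Finset.sum_add_distrib, ih]
    have h2 : (∀ a ∈ s, h {a, x} = h {x, a}) := by
      intro a _; rw [Finset.pair_comm]
    rw [Finset.sum_congr rfl h2]
    rw [Finset.powersetCard_succ_insert hx 1]
    have hdisj : Disjoint (Finset.powersetCard 2 s)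
        ((Finset.powersetCard 1 s).image (insert x)) := by
      rw [Finset.disjoint_left]
      intro T hT hT'
      obtain ⟨U, _, rfl⟩ := Finset.mem_image.1 hT'
      have := (Finset.mem_powersetCard.1 hT).1
      exact hx (this (Finset.mem_insert_self x U))
    rw [Finset.sum_union hdisj]
    have hinj : ∀ T ∈ Finset.powersetCard 1 s, ∀ U ∈ Finset.powersetCard 1 s,
        insert x T = insert x U → T = U := by
      intro T hT U hU e
      rw [Finset.powersetCard_one, Finset.mem_map] at hT hU
      obtain ⟨a, ha, rfl⟩ := hT
      obtain ⟨b, hb, rfl⟩ := hU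
      simp only [Function.Embedding.coeFn_mk] at e ⊢
      have hax : a ≠ x := fun e' => hx (e' ▸ ha)
      have : a ∈ insert x {b} := e ▸ Finset.mem_insert_of_mem (Finset.mem_singleton_self a)
      rcases Finset.mem_insert.1 this with e' | e'
      · exact absurd e' hax
      · rw [Finset.mem_singleton.1 e']
    have h4 : ∑ T ∈ (Finset.powersetCard 1 s).image (insert x), h T
        = ∑ a ∈ s, h {x, a} := by
      rw [Finset.sum_image hinj, Finset.powersetCard_one, Finset.sum_map]
      rfl
    rw [h4]
    ring

lemma newton_base (i : ℕ) (y : Fin (i + 2) → ℝ) :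
    2 * (i + 2 : ℝ) * (esymmF (i + 2) i y * esymmF (i + 2) (i + 2) y) ≤
      (i + 1 : ℝ) * esymmF (i + 2) (i + 1) y ^ 2 := by
  classical
  set Q : Fin (i+2) → ℝ := fun a => ∏ b ∈ Finset.univ.erase a, y b with hQ
  set P : ℝ := ∏ b : Fin (i+2), y b with hP
  have f1 : esymmF (i+2) (i+2) y = P := by
    have h := Finset.powersetCard_self (Finset.univ : Finset (Fin (i+2)))
    rw [Finset.card_fin] at h
    rw [esymmF, h, Finset.sum_singleton]
  have f2 : esymmF (i+2) (i + 1) y = ∑ a : Fin (i+2), Q a := by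
    rw [esymmF_compl (by omega : 1 + (i+1) = i+2), Finset.powersetCard_one, Finset.sum_map]
    refine Finset.sum_congr rfl fun a _ => ?_
    simp only [hQ, Function.Embedding.coeFn_mk, Finset.erase_eq]
  have f3 : esymmF (i+2) i y = ∑ T ∈ (Finset.univ : Finset (Fin (i+2))).powersetCard 2,
      ∏ j ∈ Finset.univ \ T, y j := esymmF_compl (by omega) y
  have key : ∀ a b : Fin (i+2), a ≠ b → Q a * Q b = P * ∏ j ∈ Finset.univ \ ({a, b} : Finset (Fin (i+2))), y j := by
    intro a b hab
    set D : Finset (Fin (i+2)) := Finset.univ \ {a, b} with hD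
    have hbD : b ∉ D := by simp [hD]
    have haD : a ∉ D := by simp [hD]
    have e1 : Finset.univ.erase a = insert b D := by
      ext x
      simp only [Finset.mem_erase, Finset.mem_univ, and_true, Finset.mem_insert, hD,
        Finset.mem_sdiff, Finset.mem_singleton, true_and]
      constructor
      · intro hxa
        by_cases hxb : x = b
        · exact Or.inl hxb
        · exact Or.inr (by simp [hxa, hxb])
      · rintro (rfl | hx)
        · exact Ne.symm hab
        · exact fun e => hx (Or.inl e)
    have e2 : Finset.univ.erase b = insert a D := by
      ext x
      simp only [Finset.mem_erase, Finset.mem_univ, and_true, Finset.mem_insert, hD,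
        Finset.mem_sdiff, Finset.mem_singleton, true_and]
      constructor
      · intro hxb
        by_cases hxa : x = a
        · exact Or.inl hxa
        · exact Or.inr (by simp [hxa, hxb])
      · rintro (rfl | hx)
        · exact hab
        · exact fun e => hx (Or.inr e)
    have e3 : (Finset.univ : Finset (Fin (i+2))) = insert a (insert b D) := by
      rw [← e1, Finset.insert_erase (Finset.mem_univ a)]
    have pa : Q a = y b * ∏ j ∈ D, y j := by simp only [hQ]; rw [e1, Finset.prod_insert hbD]
    have pb : Q b = y a * ∏ j ∈ D, y j := by simp only [hQ]; rw [e2, Finset.prod_insert haD]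
    have pP : P = y a * (y b * ∏ j ∈ D, y j) := by
      have haI : a ∉ insert b D := by
        rw [← e1]; exact Finset.notMem_erase a _
      rw [hP, e3, Finset.prod_insert haI, Finset.prod_insert hbD]
    rw [pa, pb, pP]
    ring
  have hR : ∑ a : Fin (i+2), ∑ b ∈ Finset.univ.erase a, Q a * Q b
      = 2 * (P * esymmF (i+2) i y) := by
    have : ∀ a : Fin (i+2), ∀ b ∈ Finset.univ.erase a, Q a * Q b
        = P * ∏ j ∈ Finset.univ \ ({a, b} : Finset (Fin (i+2))), y j := by
      intro a b hb
      exact key a b (Ne.symm (Finset.mem_erase.1 hb).1)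
    calc ∑ a : Fin (i+2), ∑ b ∈ Finset.univ.erase a, Q a * Q b
        = ∑ a : Fin (i+2), ∑ b ∈ Finset.univ.erase a,
            P * ∏ j ∈ Finset.univ \ ({a, b} : Finset (Fin (i+2))), y j :=
          Finset.sum_congr rfl fun a _ => Finset.sum_congr rfl fun b hb => this a b hb
      _ = P * ∑ a : Fin (i+2), ∑ b ∈ Finset.univ.erase a,
            ∏ j ∈ Finset.univ \ ({a, b} : Finset (Fin (i+2))), y j := by
          rw [Finset.mul_sum]; exact Finset.sum_congr rfl fun a _ => (Finset.mul_sum _ _ _).symm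
      _ = P * (2 * ∑ T ∈ (Finset.univ : Finset (Fin (i+2))).powersetCard 2,
            ∏ j ∈ Finset.univ \ T, y j) := by
          rw [pair_sum (fun T => ∏ j ∈ Finset.univ \ T, y j) Finset.univ]
      _ = 2 * (P * esymmF (i+2) i y) := by rw [f3]; ring
  have hsq : (∑ a : Fin (i+2), Q a) ^ 2 = (∑ a : Fin (i+2), Q a ^ 2)
      + ∑ a : Fin (i+2), ∑ b ∈ Finset.univ.erase a, Q a * Q b := by
    rw [sq, Finset.sum_mul_sum, ← Finset.sum_add_distrib]
    refine Finset.sum_congr rfl fun a _ => ?_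
    rw [← Finset.add_sum_erase _ (fun b => Q a * Q b) (Finset.mem_univ a), sq]
  have hCS : (∑ a : Fin (i+2), Q a) ^ 2 ≤ ((i+2 : ℕ) : ℝ) * ∑ a : Fin (i+2), Q a ^ 2 := by
    have := sq_sum_le_card_mul_sum_sq (s := (Finset.univ : Finset (Fin (i+2)))) (f := Q)
    simpa using this
  rw [f1, f2]
  push_cast at hCS ⊢
  nlinarith [hR, hsq, hCS, sq_nonneg (∑ a : Fin (i+2), Q a)]

lemma esymmF_eq_esymm (n k : ℕ) (x : Fin n → ℝ) :
    esymmF n k x = (Multiset.map x Finset.univ.val).esymm k := by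
  rw [esymmF, ← Finset.esymm_map_val]

lemma card_roots_iterate (p : ℝ[X]) (d : ℕ) :
    Multiset.card p.roots ≤ Multiset.card ((derivative)^[d] p).roots + d := by
  induction d with
  | zero => simp
  | succ d ih =>
    rw [Function.iterate_succ_apply']
    have h := Polynomial.card_roots_le_derivative ((derivative)^[d] p)
    omega

lemma multiset_exists_fn (s : Multiset ℝ) (N : ℕ) (h : Multiset.card s = N) :
    ∃ y : Fin N → ℝ, s = Multiset.map y Finset.univ.val := by
  subst h
  induction s using Quotient.inductionOn with
  | h l => exact ⟨l.get, by have h1 := Fin.univ_val_map l.get; rw [List.ofFn_get] at h1; exact h1.symm⟩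

lemma newton_ineq (d i : ℕ) (x : Fin (i + 2 + d) → ℝ) :
    ((i + 2) * (d + 2) : ℝ) * (esymmF (i + 2 + d) i x * esymmF (i + 2 + d) (i + 2) x) ≤
      ((i + 1) * (d + 1) : ℝ) * esymmF (i + 2 + d) (i + 1) x ^ 2 := by
  classical
  set P : ℝ[X] := ∏ a : Fin (i+2+d), (X + C (x a)) with hPdef
  have hPm : P.Monic := Polynomial.monic_prod_of_monic _ _ fun a _ => Polynomial.monic_X_add_C _
  have hdegP : P.natDegree = i+2+d := by
    rw [hPdef, Polynomial.natDegree_prod_of_monic _ _ fun a _ => Polynomial.monic_X_add_C _]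
    simp
  have hrootsP : Multiset.card P.roots = i+2+d := by
    have e : P = (Multiset.map (fun a => X - C a)
        (Multiset.map (fun a => -x a) Finset.univ.val)).prod := by
      rw [hPdef, Finset.prod_eq_multiset_prod, Multiset.map_map]
      congr 1
      refine Multiset.map_congr rfl fun a _ => ?_
      simp [sub_eq_add_neg]
    rw [e, Polynomial.roots_multiset_prod_X_sub_C]
    simp
  set Q : ℝ[X] := (derivative)^[d] P with hQdef
  have coeffQ : ∀ c : ℕ, Q.coeff c = (((c + d).descFactorial d : ℕ) : ℝ) * P.coeff (c + d) := by
    intro c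
    rw [hQdef, Polynomial.coeff_iterate_derivative, nsmul_eq_mul]
  have hPtop : P.coeff (i+2+d) = 1 := by
    have := hPm.coeff_natDegree
    rwa [hdegP] at this
  have ctop : Q.coeff (i + 2) = (((i+2+d).descFactorial d : ℕ) : ℝ) := by
    rw [coeffQ, hPtop, mul_one]
  have hdfpos : 0 < (i+2+d).descFactorial d := Nat.pos_of_ne_zero (fun h => by
    rw [Nat.descFactorial_eq_zero_iff_lt] at h
    omega)
  have hQ0 : Q ≠ 0 := fun h => by
    rw [h, Polynomial.coeff_zero] at ctop
    exact absurd ctop.symm (by positivity)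
  have hdegQ : Q.natDegree = i + 2 := by
    have h1 : Q.natDegree ≤ i + 2 := by
      have h3 := Polynomial.natDegree_iterate_derivative P d
      rw [hdegP, ← hQdef] at h3
      omega
    have h2 : i + 2 ≤ Q.natDegree := by
      refine Polynomial.le_natDegree_of_ne_zero ?_
      rw [ctop]
      positivity
    omega
  have hcardQ : Multiset.card Q.roots = i + 2 := by
    have h1 : Multiset.card Q.roots ≤ i + 2 := hdegQ ▸ Polynomial.card_roots' Q
    have h2 := card_roots_iterate P d
    rw [hrootsP, ← hQdef] at h2
    omega
  have hsplits : Q.Splits :=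
    (Polynomial.splits_iff_card_roots).2 (hcardQ.trans hdegQ.symm)
  have hfact : Q = C Q.leadingCoeff * (Q.roots.map fun a => X - C a).prod :=
    hsplits.eq_prod_roots
  set t : Multiset ℝ := Q.roots.map Neg.neg with ht
  have hcardt : Multiset.card t = i + 2 := by rw [ht, Multiset.card_map, hcardQ]
  set lc : ℝ := Q.leadingCoeff with hlc
  have hlcval : lc = (((i+2+d).descFactorial d : ℕ) : ℝ) := by
    rw [hlc, Polynomial.leadingCoeff, hdegQ, ctop]
  have hlcpos : 0 < lc := by rw [hlcval]; positivity
  have coeffQ' : ∀ c : ℕ, c ≤ i + 2 → Q.coeff c = lc * t.esymm (i + 2 - c) := by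
    intro c hc
    have e : (Q.roots.map fun a => X - C a) = t.map fun a => X + C a := by
      rw [ht, Multiset.map_map]
      refine Multiset.map_congr rfl fun a _ => ?_
      simp [sub_eq_add_neg]
    conv_lhs => rw [hfact]
    rw [Polynomial.coeff_C_mul, e, Multiset.prod_X_add_C_coeff t (by omega : c ≤ Multiset.card t),
      hcardt]
  obtain ⟨y, hy⟩ := multiset_exists_fn t (i + 2) hcardt
  have hesymm : ∀ r : ℕ, esymmF (i + 2) r y = t.esymm r := by
    intro r
    rw [esymmF_eq_esymm, ← hy]
  -- the three coefficient identities
  have hc0 : lc * t.esymm (i + 2) = ((d.descFactorial d : ℕ) : ℝ) * esymmF (i+2+d) (i + 2) x := by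
    have h1 := coeffQ' 0 (by omega)
    have h2 := coeffQ 0
    rw [h1] at h2
    rw [show i + 2 - 0 = i + 2 from rfl] at h2
    rw [h2, show (0 + d) = d from by omega]
    congr 1
    have := esymmF_coeff (i+2+d) x (show d ≤ i+2+d by omega)
    rw [show i+2+d - d = i + 2 from by omega] at this
    rw [this]
  have hc1 : lc * t.esymm (i + 1) = (((1 + d).descFactorial d : ℕ) : ℝ) * esymmF (i+2+d) (i + 1) x := by
    have h1 := coeffQ' 1 (by omega)
    have h2 := coeffQ 1
    rw [h1] at h2
    rw [show i + 2 - 1 = i + 1 from by omega] at h2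
    rw [h2]
    congr 1
    have := esymmF_coeff (i+2+d) x (show 1 + d ≤ i+2+d by omega)
    rw [show i+2+d - (1 + d) = i + 1 from by omega] at this
    rw [this]
  have hc2 : lc * t.esymm i = (((2 + d).descFactorial d : ℕ) : ℝ) * esymmF (i+2+d) i x := by
    have h1 := coeffQ' 2 (by omega)
    have h2 := coeffQ 2
    rw [h1] at h2
    rw [show i + 2 - 2 = i from by omega] at h2
    rw [h2]
    congr 1
    have := esymmF_coeff (i+2+d) x (show 2 + d ≤ i+2+d by omega)
    rw [show i+2+d - (2 + d) = i from by omega] at this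
    rw [this]
  -- base inequality
  have hbase := newton_base i y
  rw [hesymm i, hesymm (i + 1), hesymm (i + 2)] at hbase
  -- multiply by lc^2
  have hmul : 2 * ((i : ℝ) + 2) * ((lc * t.esymm i) * (lc * t.esymm (i + 2))) ≤
      ((i : ℝ) + 1) * (lc * t.esymm (i + 1)) ^ 2 := by
    have h := mul_le_mul_of_nonneg_left hbase (le_of_lt (mul_pos hlcpos hlcpos))
    calc 2 * ((i : ℝ) + 2) * ((lc * t.esymm i) * (lc * t.esymm (i + 2)))
        = lc * lc * (2 * ((i : ℝ) + 2) * (t.esymm i * t.esymm (i + 2))) := by ring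
      _ ≤ lc * lc * (((i : ℝ) + 1) * t.esymm (i + 1) ^ 2) := h
      _ = ((i : ℝ) + 1) * (lc * t.esymm (i + 1)) ^ 2 := by ring
  rw [hc0, hc1, hc2] at hmul
  -- descFactorial values
  have hK0 : ((d.descFactorial d : ℕ) : ℝ) = (d.factorial : ℝ) := by
    rw [Nat.descFactorial_self]
  have hK1 : (((1 + d).descFactorial d : ℕ) : ℝ) = ((d : ℝ) + 1) * (d.factorial : ℝ) := by
    have e1 : (1 + d).descFactorial (d + 1) = (1 + d - d) * (1 + d).descFactorial d :=
      Nat.descFactorial_succ (1 + d) d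
    rw [show 1 + d - d = 1 from by omega, one_mul] at e1
    rw [← e1, show 1 + d = d + 1 from by omega, Nat.descFactorial_self]
    push_cast [Nat.factorial_succ]
    ring
  have hK2 : 2 * (((2 + d).descFactorial d : ℕ) : ℝ)
      = ((d : ℝ) + 2) * (((d : ℝ) + 1) * (d.factorial : ℝ)) := by
    have e1 : (2 + d).descFactorial (d + 1) = (2 + d - d) * (2 + d).descFactorial d :=
      Nat.descFactorial_succ (2 + d) d
    have e2 : (2 + d).descFactorial (d + 2) = (2 + d - (d + 1)) * (2 + d).descFactorial (d + 1) :=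
      Nat.descFactorial_succ (2 + d) (d + 1)
    rw [show 2 + d - d = 2 from by omega] at e1
    rw [show 2 + d - (d + 1) = 1 from by omega, one_mul, e1] at e2
    have e3 : (2 + d).descFactorial (d + 2) = (d + 2).factorial := by
      rw [show 2 + d = d + 2 from by omega, Nat.descFactorial_self]
    rw [e3] at e2
    have : ((d + 2).factorial : ℝ) = 2 * (((2 + d).descFactorial d : ℕ) : ℝ) := by
      rw [e2]; push_cast; ring
    rw [this.symm]
    push_cast [Nat.factorial_succ]
    ring
  rw [hK0, hK1] at hmul
  set F : ℝ := (d.factorial : ℝ) with hF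
  have hFpos : 0 < F := by rw [hF]; positivity
  have hK2' : (((2 + d).descFactorial d : ℕ) : ℝ) = ((d : ℝ) + 2) * (((d : ℝ) + 1) * F) / 2 := by
    rw [hF]; linarith [hK2]
  rw [hK2'] at hmul
  -- conclude
  have hcpos : (0 : ℝ) < ((d : ℝ) + 1) * F ^ 2 := by positivity
  refine le_of_mul_le_mul_left ?_ hcpos
  have goal_eq : (((d : ℝ) + 1) * F ^ 2) * (((i + 2) * (d + 2) : ℝ) *
        (esymmF (i+2+d) i x * esymmF (i+2+d) (i + 2) x))
      = 2 * ((i : ℝ) + 2) * ((((d : ℝ) + 2) * (((d : ℝ) + 1) * F) / 2 * esymmF (i+2+d) i x) *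
        (F * esymmF (i+2+d) (i + 2) x)) := by push_cast; ring
  have goal_eq2 : (((d : ℝ) + 1) * F ^ 2) * (((i + 1) * (d + 1) : ℝ) *
        esymmF (i+2+d) (i + 1) x ^ 2)
      = ((i : ℝ) + 1) * ((((d : ℝ) + 1) * F) * esymmF (i+2+d) (i + 1) x) ^ 2 := by push_cast; ring
  rw [goal_eq, goal_eq2]
  exact hmul

lemma newton_cor {m j : ℕ} (hj : 1 ≤ j) (hjm : j + 1 ≤ m) (x : Fin m → ℝ) :
    esymmF m (j - 1) x * esymmF m (j + 1) x ≤ esymmF m j x ^ 2 := by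
  obtain ⟨i, rfl⟩ : ∃ i, j = i + 1 := ⟨j - 1, by omega⟩
  obtain ⟨d, rfl⟩ : ∃ d, m = i + 2 + d := ⟨m - (i + 2), by omega⟩
  have H := newton_ineq d i x
  show esymmF (i + 2 + d) i x * esymmF (i + 2 + d) (i + 2) x ≤ esymmF (i + 2 + d) (i + 1) x ^ 2
  have hi : (0 : ℝ) ≤ (i : ℝ) := Nat.cast_nonneg i
  have hd : (0 : ℝ) ≤ (d : ℝ) := Nat.cast_nonneg d
  have c1 : ((i : ℝ) + 1) * ((d : ℝ) + 1) ≤ ((i : ℝ) + 2) * ((d : ℝ) + 2) := by nlinarith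
  have c2 : (0 : ℝ) < ((i : ℝ) + 2) * ((d : ℝ) + 2) := by positivity
  refine le_of_mul_le_mul_left ?_ c2
  calc ((i : ℝ) + 2) * ((d : ℝ) + 2) * (esymmF (i + 2 + d) i x * esymmF (i + 2 + d) (i + 2) x)
      ≤ ((i : ℝ) + 1) * ((d : ℝ) + 1) * esymmF (i + 2 + d) (i + 1) x ^ 2 := H
    _ ≤ ((i : ℝ) + 2) * ((d : ℝ) + 2) * esymmF (i + 2 + d) (i + 1) x ^ 2 :=
        mul_le_mul_of_nonneg_right c1 (sq_nonneg _)

lemma newton_zero {m j : ℕ} (hj : 1 ≤ j) (hjm : j + 1 ≤ m) (x : Fin m → ℝ)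
    (h : esymmF m j x = 0) :
    esymmF m (j - 1) x * esymmF m (j + 1) x ≤ 0 := by
  obtain ⟨i, rfl⟩ : ∃ i, j = i + 1 := ⟨j - 1, by omega⟩
  obtain ⟨d, rfl⟩ : ∃ d, m = i + 2 + d := ⟨m - (i + 2), by omega⟩
  have H := newton_ineq d i x
  rw [h] at H
  show esymmF (i + 2 + d) i x * esymmF (i + 2 + d) (i + 2) x ≤ 0
  have c2 : (0 : ℝ) < ((i : ℝ) + 2) * ((d : ℝ) + 2) := by positivity
  by_contra hA
  push_neg at hA
  nlinarith [mul_pos c2 hA]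

lemma esymmF_split (m : ℕ) (x : Fin (m + 1) → ℝ) (j : ℕ) (hj : 1 ≤ j) :
    esymmF (m + 1) j x = esymmF m j (fun i => x i.castSucc)
      + x (Fin.last m) * esymmF m (j - 1) (fun i => x i.castSucc) := by
  rcases lt_trichotomy j (m + 1) with hlt | heq | hgt
  · -- j ≤ m
    have hjm : j ≤ m := by omega
    set Q : ℝ[X] := ∏ i : Fin m, (X + C (x i.castSucc)) with hQ
    have hP : (∏ i : Fin (m + 1), (X + C (x i))) = Q * (X + C (x (Fin.last m))) := by
      rw [Fin.prod_univ_castSucc]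
    have e1 : esymmF (m + 1) j x = (∏ i : Fin (m + 1), (X + C (x i))).coeff (m + 1 - j) := by
      rw [esymmF_coeff (m + 1) x (by omega)]
      congr 1
      omega
    rw [e1, hP, mul_add, Polynomial.coeff_add, show m + 1 - j = (m - j) + 1 from by omega,
      Polynomial.coeff_mul_X, mul_comm Q (C (x (Fin.last m))), Polynomial.coeff_C_mul]
    rw [esymmF_coeff m _ (show m - j ≤ m by omega), show m - (m - j) = j from by omega]
    rw [esymmF_coeff m _ (show (m - j) + 1 ≤ m by omega),
      show m - ((m - j) + 1) = j - 1 from by omega]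
  · -- j = m + 1
    subst heq
    have h1 : esymmF (m + 1) (m + 1) x = ∏ i : Fin (m + 1), x i := by
      have h := Finset.powersetCard_self (Finset.univ : Finset (Fin (m + 1)))
      rw [Finset.card_fin] at h
      rw [esymmF, h, Finset.sum_singleton]
    have h2 : esymmF m m (fun i => x i.castSucc) = ∏ i : Fin m, x i.castSucc := by
      have h := Finset.powersetCard_self (Finset.univ : Finset (Fin m))
      rw [Finset.card_fin] at h
      rw [esymmF, h, Finset.sum_singleton]
    rw [h1, Fin.prod_univ_castSucc, esymmF_of_gt (by omega) _,
      show m + 1 - 1 = m from rfl, h2]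
    ring
  · rw [esymmF_of_gt (by omega) x, esymmF_of_gt (by omega) _, esymmF_of_gt (by omega) _]
    ring

lemma gammaK_mono {n k j : ℕ} (h : j ≤ k) {lam : Fin n → ℝ} (hl : lam ∈ GammaK n k) :
    lam ∈ GammaK n j := fun r hr1 hr2 => hl r hr1 (hr2.trans h)

lemma card_filter_supersets {n j : ℕ} (T : Finset (Fin n)) (hT : T.card ≤ j) :
    (((Finset.univ : Finset (Fin n)).powersetCard j).filter (fun S => T ⊆ S)).card
      = (n - T.card).choose (j - T.card) := by
  classical
  have key : (((Finset.univ : Finset (Fin n)).powersetCard j).filter (fun S => T ⊆ S)).card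
      = ((Finset.univ \ T).powersetCard (j - T.card)).card := by
    refine Finset.card_nbij' (fun S => S \ T) (fun S' => S' ∪ T) ?_ ?_ ?_ ?_
    · intro S hS
      rw [Finset.mem_coe, Finset.mem_filter, Finset.mem_powersetCard_univ] at hS
      rw [Finset.mem_coe, Finset.mem_powersetCard]
      exact ⟨Finset.sdiff_subset_sdiff (Finset.subset_univ S) le_rfl,
        by rw [Finset.card_sdiff_of_subset hS.2, hS.1]⟩
    · intro S' hS'
      rw [Finset.mem_coe, Finset.mem_powersetCard] at hS'
      rw [Finset.mem_coe, Finset.mem_filter, Finset.mem_powersetCard_univ]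
      have hdisj : Disjoint S' T := by
        refine Finset.disjoint_left.2 fun a ha hb => ?_
        exact (Finset.mem_sdiff.1 (hS'.1 ha)).2 hb
      constructor
      · rw [Finset.card_union_of_disjoint hdisj, hS'.2]
        omega
      · exact Finset.subset_union_right
    · intro S hS
      rw [Finset.mem_coe, Finset.mem_filter] at hS
      exact Finset.sdiff_union_of_subset hS.2
    · intro S' hS'
      rw [Finset.mem_coe, Finset.mem_powersetCard] at hS'
      have hdisj : Disjoint S' T := by
        refine Finset.disjoint_left.2 fun a ha hb => ?_
        exact (Finset.mem_sdiff.1 (hS'.1 ha)).2 hb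
      show (S' ∪ T) \ T = S'
      rw [Finset.union_sdiff_cancel_right hdisj]
  rw [key, Finset.card_powersetCard, Finset.card_sdiff_of_subset (Finset.subset_univ T),
    Finset.card_univ, Fintype.card_fin]

lemma esymmF_shift (n j : ℕ) (mu : Fin n → ℝ) (s : ℝ) :
    esymmF n j (fun i => mu i + s) = ∑ m ∈ Finset.range (j + 1),
      ((n - m).choose (j - m) : ℝ) * s ^ (j - m) * esymmF n m mu := by
  classical
  set F : Finset (Fin n) → ℝ := fun T => (∏ i ∈ T, mu i) * s ^ (j - T.card) with hF
  have stepA : esymmF n j (fun i => mu i + s)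
      = ∑ S ∈ (Finset.univ : Finset (Fin n)).powersetCard j, ∑ T ∈ S.powerset, F T := by
    rw [esymmF]
    refine Finset.sum_congr rfl fun S hS => ?_
    rw [Finset.mem_powersetCard_univ] at hS
    rw [Finset.prod_add]
    refine Finset.sum_congr rfl fun T hT => ?_
    rw [Finset.mem_powerset] at hT
    rw [hF, Finset.prod_const, Finset.card_sdiff_of_subset hT, hS]
  have stepB : ∑ S ∈ (Finset.univ : Finset (Fin n)).powersetCard j, ∑ T ∈ S.powerset, F T
      = ∑ T ∈ (Finset.univ : Finset (Fin n)).powerset,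
          ((((Finset.univ : Finset (Fin n)).powersetCard j).filter
            (fun S => T ⊆ S)).card : ℝ) * F T := by
    have h1 : ∀ S : Finset (Fin n), S.powerset
        = (Finset.univ : Finset (Fin n)).powerset.filter (fun T => T ⊆ S) := by
      intro S
      ext T
      simp [Finset.mem_powerset, Finset.mem_filter, Finset.subset_univ]
    calc ∑ S ∈ (Finset.univ : Finset (Fin n)).powersetCard j, ∑ T ∈ S.powerset, F T
        = ∑ S ∈ (Finset.univ : Finset (Fin n)).powersetCard j,
            ∑ T ∈ (Finset.univ : Finset (Fin n)).powerset, if T ⊆ S then F T else 0 := by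
          refine Finset.sum_congr rfl fun S _ => ?_
          rw [h1 S, Finset.sum_filter]
      _ = ∑ T ∈ (Finset.univ : Finset (Fin n)).powerset,
            ∑ S ∈ (Finset.univ : Finset (Fin n)).powersetCard j, if T ⊆ S then F T else 0 :=
          Finset.sum_comm
      _ = _ := by
          refine Finset.sum_congr rfl fun T _ => ?_
          rw [← Finset.sum_filter, Finset.sum_const, nsmul_eq_mul]
  rw [stepA, stepB, Finset.sum_powerset]
  rw [Finset.card_univ, Fintype.card_fin]
  have hsplit : ∀ m ∈ Finset.range (n + 1),
      ∑ T ∈ (Finset.univ : Finset (Fin n)).powersetCard m,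
        ((((Finset.univ : Finset (Fin n)).powersetCard j).filter (fun S => T ⊆ S)).card : ℝ) * F T
      = if m ≤ j then ((n - m).choose (j - m) : ℝ) * s ^ (j - m) * esymmF n m mu else 0 := by
    intro m _
    by_cases hmj : m ≤ j
    · rw [if_pos hmj, esymmF, Finset.mul_sum]
      refine Finset.sum_congr rfl fun T hT => ?_
      rw [Finset.mem_powersetCard_univ] at hT
      rw [card_filter_supersets T (hT ▸ hmj)]
      simp only [hF, hT]
      ring
    · rw [if_neg hmj]
      refine Finset.sum_eq_zero fun T hT => ?_
      rw [Finset.mem_powersetCard_univ] at hT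
      have : (((Finset.univ : Finset (Fin n)).powersetCard j).filter
          (fun S => T ⊆ S)).card = 0 := by
        rw [Finset.card_eq_zero, Finset.filter_eq_empty_iff]
        intro S hS hTS
        rw [Finset.mem_powersetCard_univ] at hS
        have := Finset.card_le_card hTS
        omega
      rw [this]
      simp
  rw [Finset.sum_congr rfl hsplit]
  by_cases hjn : j ≤ n
  · rw [← Finset.sum_filter]
    have hfilter : (Finset.range (n + 1)).filter (fun m => m ≤ j) = Finset.range (j + 1) := by
      ext a
      simp only [Finset.mem_filter, Finset.mem_range]
      omega
    rw [hfilter]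
  · have h2 : ∀ m ∈ Finset.range (n + 1),
        (if m ≤ j then ((n - m).choose (j - m) : ℝ) * s ^ (j - m) * esymmF n m mu else 0)
        = ((n - m).choose (j - m) : ℝ) * s ^ (j - m) * esymmF n m mu := by
      intro m hm
      rw [Finset.mem_range] at hm
      exact if_pos (by omega)
    rw [Finset.sum_congr rfl h2]
    refine Finset.sum_subset (by intro a ha; rw [Finset.mem_range] at ha ⊢; omega) ?_
    intro m hm hnot
    rw [Finset.mem_range] at hm
    have : n < m := by
      rw [Finset.mem_range] at hnot
      omega
    rw [esymmF_of_gt this, mul_zero]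

lemma segment_mem {n k : ℕ} (hk : k ≤ n) {lam : Fin n → ℝ} (hl : lam ∈ GammaK n k) {t : ℝ}
    (ht0 : 0 ≤ t) (ht1 : t ≤ 1) : (fun i => (1 - t) * lam i + t) ∈ GammaK n k := by
  intro j hj1 hj2
  rcases eq_or_lt_of_le ht1 with rfl | hlt
  · have e : (fun i : Fin n => (1 - 1) * lam i + 1) = fun _ => (1 : ℝ) := by
      funext i; ring
    rw [e, esymmF_ones]
    exact_mod_cast Nat.choose_pos (hj2.trans hk)
  · have e := esymmF_shift n j (fun i => (1 - t) * lam i) t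
    rw [e]
    refine Finset.sum_pos' ?_ ?_
    · intro m hm
      rw [Finset.mem_range] at hm
      have h1 : (0 : ℝ) ≤ ((n - m).choose (j - m) : ℝ) := Nat.cast_nonneg _
      have h2 : (0 : ℝ) ≤ t ^ (j - m) := pow_nonneg ht0 _
      have h3 : (0 : ℝ) ≤ esymmF n m (fun i => (1 - t) * lam i) := by
        rw [esymmF_smul]
        rcases Nat.eq_zero_or_pos m with rfl | hm1
        · rw [esymmF_zero]
          exact mul_nonneg (pow_nonneg (by linarith) _) (by norm_num)
        · have := hl m hm1 (by omega)
          exact mul_nonneg (pow_nonneg (by linarith) _) this.le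
      exact mul_nonneg (mul_nonneg h1 h2) h3
    · refine ⟨j, Finset.self_mem_range_succ j, ?_⟩
      rw [Nat.sub_self, pow_zero, Nat.choose_zero_right, esymmF_smul]
      have h4 := hl j hj1 hj2
      have h5 : (0 : ℝ) < (1 - t) ^ j := pow_pos (by linarith) _
      simp only [Nat.cast_one]
      nlinarith
  
lemma thmA (m : ℕ) : ∀ k, 1 ≤ k → k ≤ m → ∀ lam ∈ GammaK (m + 1) k,
    0 < esymmF m (k - 1) (fun i => lam i.castSucc) := by
  intro k
  induction k with
  | zero => omega
  | succ k ih =>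
    intro _ hk2 lam hlam
    rcases Nat.eq_zero_or_pos k with rfl | hk1
    · rw [show 0 + 1 - 1 = 0 from rfl, esymmF_zero]
      norm_num
    · have claim : ∀ mu ∈ GammaK (m + 1) (k + 1),
          esymmF m k (fun i => mu i.castSucc) ≠ 0 := by
        intro mu hmu h0
        have hprev : 0 < esymmF m (k - 1) (fun i => mu i.castSucc) :=
          ih hk1 (by omega) mu (gammaK_mono (by omega) hmu)
        have hz := newton_zero (m := m) (j := k) hk1 (by omega) (fun i => mu i.castSucc) h0
        have hle : esymmF m (k + 1) (fun i => mu i.castSucc) ≤ 0 := by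
          by_contra hpos
          push_neg at hpos
          nlinarith
        have hsplit := esymmF_split m mu (k + 1) (by omega)
        rw [show k + 1 - 1 = k from rfl, h0, mul_zero, add_zero] at hsplit
        have hp := hmu (k + 1) (by omega) le_rfl
        rw [hsplit] at hp
        linarith
      set g : ℝ → ℝ := fun t => esymmF m k (fun i => (1 - t) * lam i.castSucc + t) with hg
      have hgc : Continuous g := by
        simp only [hg, esymmF]
        refine continuous_finset_sum _ fun S _ => continuous_finset_prod _ fun i _ => ?_
        exact ((continuous_const.sub continuous_id).mul continuous_const).add continuous_id
      have hg1pos : 0 < g 1 := by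
        have e : (fun i : Fin m => (1 - (1:ℝ)) * lam i.castSucc + 1) = fun _ => (1 : ℝ) := by
          funext i; ring
        simp only [hg, e, esymmF_ones]
        exact_mod_cast Nat.choose_pos (by omega : k ≤ m)
      have hzero : ∀ t ∈ Set.Icc (0:ℝ) 1, g t ≠ 0 := by
        intro t ht
        have hmem := segment_mem (by omega : k + 1 ≤ m + 1) hlam ht.1 ht.2
        exact claim _ hmem
      have hg0 : g 0 = esymmF m k (fun i => lam i.castSucc) := by
        simp only [hg]
        congr 1
        funext i
        ring
      rw [show k + 1 - 1 = k from rfl]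
      by_contra hng
      push_neg at hng
      rw [← hg0] at hng
      have h0mem : (0:ℝ) ∈ Set.Icc (g 0) (g 1) := ⟨hng, hg1pos.le⟩
      obtain ⟨c, hc, hgc0⟩ :=
        intermediate_value_Icc (by norm_num : (0:ℝ) ≤ 1) hgc.continuousOn h0mem
      exact hzero c hc hgc0

end AuxNewton

/-- **Lemma.** For `λ ∈ Γ_k ⊆ ℝⁿ` with `λ' = (λ₁,…,λ_{n−1})` one has
`σ_k(λ')σ_k(λ) ≥ σ_{k−1}(λ')σ_{k+1}(λ)`, `σ_k(λ) > 0`, `σ_{k−1}(λ') > 0`, hence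
`σ_k(λ')/σ_{k−1}(λ') ≥ σ_{k+1}(λ)/σ_k(λ)`. -/
theorem sigma_quotient_estimate (n k : ℕ) (hn : 2 ≤ n) (hk1 : 1 ≤ k) (hk2 : k ≤ n - 1)
    (lam : Fin n → ℝ) (hlam : lam ∈ GammaK n k) :
    let lam' : Fin (n - 1) → ℝ := fun i => lam (Fin.castLE (Nat.sub_le n 1) i)
    esymmF (n - 1) (k - 1) lam' * esymmF n (k + 1) lam ≤
        esymmF (n - 1) k lam' * esymmF n k lam ∧
      0 < esymmF n k lam ∧ 0 < esymmF (n - 1) (k - 1) lam' ∧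
      esymmF n (k + 1) lam / esymmF n k lam ≤
        esymmF (n - 1) k lam' / esymmF (n - 1) (k - 1) lam' := by
  obtain ⟨m, rfl⟩ : ∃ m, n = m + 1 := ⟨n - 1, by omega⟩
  intro lam'
  have hm : (m : ℕ) + 1 - 1 = m := rfl
  have hlam' : lam' = fun i : Fin m => lam i.castSucc := by
    funext i
    rfl
  have hkm : k ≤ m := by omega
  have h2 : 0 < esymmF (m + 1) k lam := hlam k hk1 le_rfl
  have h3 : 0 < esymmF m (k - 1) lam' := by
    rw [hlam']
    exact thmA m k hk1 hkm lam hlam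
  have hnewton : esymmF m (k - 1) lam' * esymmF m (k + 1) lam' ≤ esymmF m k lam' ^ 2 := by
    rcases lt_or_eq_of_le hkm with hlt | heq
    · exact newton_cor hk1 (by omega) lam'
    · have hz : esymmF m (k + 1) lam' = 0 := esymmF_of_gt (by omega) lam'
      rw [hz, mul_zero]
      exact sq_nonneg _
  have hsplitk := esymmF_split m lam k hk1
  have hsplitk1 := esymmF_split m lam (k + 1) (by omega)
  rw [show k + 1 - 1 = k from rfl] at hsplitk1
  rw [← hlam'] at hsplitk hsplitk1
  have h1 : esymmF m (k - 1) lam' * esymmF (m + 1) (k + 1) lam ≤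
      esymmF m k lam' * esymmF (m + 1) k lam := by
    rw [hsplitk, hsplitk1]
    nlinarith [hnewton]
  refine ⟨h1, h2, h3, (div_le_div_iff₀ h2 h3).2 ?_⟩
  show esymmF (m + 1) (k + 1) lam * esymmF m (k - 1) lam' ≤
    esymmF m k lam' * esymmF (m + 1) k lam
  nlinarith [h1]
end
end

section
/- Let n ≥ 1 and let Γ ⊆ ℝⁿ be an open convex cone with vertex at the origin such that Γ ≠ ℝⁿ, Γ is invariant under permutations of coordinates, and Γ + Γₙ ⊆ Γ where Γₙ = (0,∞)ⁿ is the positive orthant. Then Γ ⊆ Γ₁ := {λ ∈ ℝⁿ : λ₁ + ⋯ + λₙ > 0}; in particular every Γ-admissible C² function is subharmonic. -/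
open scoped BigOperators

noncomputable section

/-- **Lemma.** Every open convex permutation-invariant cone `Γ ⊊ ℝⁿ` with `Γ + Γₙ ⊆ Γ` is
contained in the half-space `Γ₁ = {λ : λ₁ + ⋯ + λₙ > 0}`; in particular every `Γ`-admissible
`C²` function is subharmonic (the trace of its Hessian, i.e. the sum of the eigenvalues of
`D²u`, is positive). -/
theorem cone_subset_gamma1 (n : ℕ) (hn : 1 ≤ n)
    (Γ : Set (Fin n → ℝ)) (hΓ : IsConvexInvariantCone Γ) :
    (∀ lam ∈ Γ, 0 < ∑ i, lam i) ∧
    (∀ (Ω : Set (EuclideanSpace ℝ (Fin n))) (u : EuclideanSpace ℝ (Fin n) → ℝ),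
      ContDiffOn ℝ 2 u Ω → (∀ x ∈ Ω, hessEigen u x ∈ Γ) →
      ∀ x ∈ Ω, 0 < ∑ i, hessEigen u x i) := by
  obtain ⟨m, rfl⟩ : ∃ m, n = m + 1 := ⟨n - 1, by omega⟩
  obtain ⟨hopen, hne, hconv, hcone, hadd, hperm⟩ := hΓ
  have key : ∀ lam ∈ Γ, 0 < ∑ i, lam i := by
    intro lam hlam
    by_contra hle
    push_neg at hle
    set s : ℝ := ∑ i, lam i with hs
    -- Γ is closed under addition
    have hadd2 : ∀ a ∈ Γ, ∀ b ∈ Γ, a + b ∈ Γ := by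
      intro a ha b hb
      have h := hconv ha hb (by norm_num : (0:ℝ) ≤ 1/2) (by norm_num : (0:ℝ) ≤ 1/2)
        (by norm_num)
      have h2 := hcone _ h 2 (by norm_num)
      convert h2 using 1
      funext i
      simp only [Pi.add_apply, Pi.smul_apply, smul_eq_mul]
      ring
    set σ : Equiv.Perm (Fin (m + 1)) := finRotate (m + 1) with hσ
    open Fin.NatCast in
    have hpow : ∀ (k : ℕ) (j : Fin (m + 1)), (σ ^ k) j = j + (k : Fin (m + 1)) := by
      intro k
      induction k with
      | zero => intro j; simp
      | succ k ih =>
        intro j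
        rw [pow_succ, Equiv.Perm.mul_apply, hσ, finRotate_succ_apply, ih]
        push_cast
        abel
    -- partial sums of lam ∘ σ^k are in Γ
    have hmem : ∀ k : ℕ, (∑ j ∈ Finset.range (k + 1), lam ∘ ⇑(σ ^ j)) ∈ Γ := by
      intro k
      induction k with
      | zero =>
        simpa using hlam
      | succ k ih =>
        rw [Finset.sum_range_succ]
        exact hadd2 _ ih _ (hperm lam hlam (σ ^ (k + 1)))
    open Fin.NatCast in
    have hS : (fun _ : Fin (m + 1) => s) ∈ Γ := by
      have h := hmem m
      have heq : (∑ j ∈ Finset.range (m + 1), lam ∘ ⇑(σ ^ j)) = fun _ : Fin (m + 1) => s := by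
        funext i
        have : (∑ j ∈ Finset.range (m + 1), lam ∘ ⇑(σ ^ j)) i
            = ∑ j ∈ Finset.range (m + 1), lam (i + (j : Fin (m + 1))) := by
          rw [Finset.sum_apply]
          exact Finset.sum_congr rfl fun j _ => by rw [Function.comp_apply, hpow]
        rw [this, ← Fin.sum_univ_eq_sum_range (fun j : ℕ => lam (i + (j : Fin (m + 1))))]
        simp only [Fin.cast_val_eq_self]
        rw [hs]
        exact Fintype.sum_equiv (Equiv.addLeft i) _ _ fun k => rfl
      rwa [heq] at h
    -- use openness to go slightly below s
    obtain ⟨ε, hε, hball⟩ := Metric.isOpen_iff.1 hopen _ hS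
    set d : ℝ := s - ε / 2 with hd
    have hdneg : d < 0 := by simp only [hd]; linarith
    have hdΓ : (fun _ : Fin (m + 1) => d) ∈ Γ := by
      apply hball
      rw [Metric.mem_ball]
      calc dist (fun _ : Fin (m + 1) => d) (fun _ : Fin (m + 1) => s) ≤ ε / 2 := by
            apply dist_pi_le_iff (by linarith) |>.2
            intro i
            rw [Real.dist_eq, hd, show s - ε / 2 - s = -(ε / 2) by ring, abs_neg,
              abs_of_nonneg (by linarith)]
        _ < ε := by linarith
    -- then Γ = univ, contradiction
    apply hne
    rw [Set.eq_univ_iff_forall]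
    intro μ
    set t : ℝ := (-d) / (‖μ‖ + 1) with ht
    have hnorm : (0:ℝ) ≤ ‖μ‖ := norm_nonneg μ
    have htpos : 0 < t := div_pos (by linarith) (by linarith)
    have htμ : t • μ ∈ Γ := by
      have : t • μ = (fun _ : Fin (m + 1) => d) + fun i => t * μ i - d := by
        funext i
        simp only [Pi.smul_apply, smul_eq_mul, Pi.add_apply]
        ring
      rw [this]
      apply hadd _ hdΓ
      intro i
      simp only [Set.mem_setOf_eq, sub_pos]
      have hμi : -‖μ‖ ≤ μ i := by
        have := norm_le_pi_norm μ i
        rw [Real.norm_eq_abs] at this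
        exact neg_le_of_abs_le this
      have h1 : t * (-‖μ‖) ≤ t * μ i := mul_le_mul_of_nonneg_left hμi htpos.le
      have h2 : d < t * (-‖μ‖) := by
        rw [ht]
        rw [div_mul_eq_mul_div, lt_div_iff₀ (by linarith)]
        nlinarith
      linarith
    have := hcone _ htμ t⁻¹ (inv_pos.2 htpos)
    rwa [smul_smul, inv_mul_cancel₀ htpos.ne', one_smul] at this
  exact ⟨key, fun Ω u _ h x hx => key _ (h x hx)⟩
end
end
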